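/- arXiv:2201.10892 — 5 statements merged into one kernel-verified Lean document; each statement's English description precedes it below -/
import Mathlib

section
/- Let n ≥ 5 and let W be a self-annihilating subspace of Λ²(ℝⁿ) such that there is no vector a ∈ ℝⁿ for which every element of W is of the form a ∧ v. Then dim W = 3 holds if and only if W is the linear span of the three 2-forms x₁ ∧ x₂, x₂ ∧ x₃, x₃ ∧ x₁ for some linearly independent vectors x₁, x₂, x₃ ∈ ℝⁿ. -/
open ExteriorAlgebra

namespace HM





noncomputable abbrev ctr {n : ℕ} (f : Module.Dual ℝ (Fin n → ℝ)) :
    ExteriorAlgebra ℝ (Fin n → ℝ) →ₗ[ℝ] ExteriorAlgebra ℝ (Fin n → ℝ) :=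
  CliffordAlgebra.contractLeft (Q := (0 : QuadraticForm ℝ (Fin n → ℝ))) f

lemma ctr_ι (f : Module.Dual ℝ (Fin n → ℝ)) (x : Fin n → ℝ) :
    ctr f (ι ℝ x) = algebraMap ℝ _ (f x) :=
  CliffordAlgebra.contractLeft_ι _ _ _

lemma ctr_ι_mul (f : Module.Dual ℝ (Fin n → ℝ)) (a : Fin n → ℝ)
    (b : ExteriorAlgebra ℝ (Fin n → ℝ)) :
    ctr f (ι ℝ a * b) = f a • b - ι ℝ a * ctr f b :=
  CliffordAlgebra.contractLeft_ι_mul (Q := (0 : QuadraticForm ℝ (Fin n → ℝ))) (d := f) a b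

lemma mul_algebraMap_eq_smul (u : ExteriorAlgebra ℝ (Fin n → ℝ)) (r : ℝ) :
    u * algebraMap ℝ _ r = r • u := by
  rw [Algebra.algebraMap_eq_smul_one, mul_smul_comm, mul_one]

lemma ctr_ι_mul_of_zero (f : Module.Dual ℝ (Fin n → ℝ)) {a : Fin n → ℝ}
    {b : ExteriorAlgebra ℝ (Fin n → ℝ)} (ha : f a = 0) (hb : ctr f b = 0) :
    ctr f (ι ℝ a * b) = 0 := by
  rw [ctr_ι_mul, ha, hb, zero_smul, mul_zero, sub_zero]

lemma ctr_ι_mul_of_one (f : Module.Dual ℝ (Fin n → ℝ)) {a : Fin n → ℝ}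
    {b : ExteriorAlgebra ℝ (Fin n → ℝ)} (ha : f a = 1) (hb : ctr f b = 0) :
    ctr f (ι ℝ a * b) = b := by
  rw [ctr_ι_mul, ha, hb, one_smul, mul_zero, sub_zero]

lemma ctr_ι_mul_ι (f : Module.Dual ℝ (Fin n → ℝ)) (x y : Fin n → ℝ) :
    ctr f (ι ℝ x * ι ℝ y) = f x • ι ℝ y - f y • ι ℝ x := by
  rw [ctr_ι_mul, ctr_ι, mul_algebraMap_eq_smul]

lemma ctr_ctr_ι_mul_ι (f g : Module.Dual ℝ (Fin n → ℝ)) (x y : Fin n → ℝ) :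
    ctr f (ctr g (ι ℝ x * ι ℝ y)) = algebraMap ℝ _ (g x * f y - g y * f x) := by
  rw [ctr_ι_mul_ι, map_sub, map_smul, map_smul, ctr_ι, ctr_ι, map_sub, Algebra.smul_def,
    ← map_mul, Algebra.smul_def, ← map_mul]

lemma ιMulti_two (v : Fin 2 → (Fin n → ℝ)) :
    ιMulti ℝ 2 v = ι ℝ (v 0) * ι ℝ (v 1) := by
  simp [ιMulti_succ_apply, ιMulti_zero_apply, Matrix.vecTail]

lemma power_two_induction (P : ExteriorAlgebra ℝ (Fin n → ℝ) → Prop)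
    (h0 : P 0) (hadd : ∀ x y, P x → P y → P (x + y))
    (hsmul : ∀ (c : ℝ) x, P x → P (c • x))
    (hgen : ∀ a b : Fin n → ℝ, P (ι ℝ a * ι ℝ b)) :
    ∀ w ∈ ⋀[ℝ]^2 (Fin n → ℝ), P w := by
  intro w hw
  rw [← ExteriorAlgebra.ιMulti_span_fixedDegree] at hw
  induction hw using Submodule.span_induction with
  | mem x hx =>
    obtain ⟨v, rfl⟩ := hx
    rw [ιMulti_two]
    exact hgen _ _
  | zero => exact h0
  | add x y _ _ hx hy => exact hadd x y hx hy
  | smul c x _ hx => exact hsmul c x hx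

lemma ι_anticomm (x y : Fin n → ℝ) : ι ℝ x * ι ℝ y = -(ι ℝ y * ι ℝ x) :=
  eq_neg_of_add_eq_zero_left (ExteriorAlgebra.ι_add_mul_swap x y)

lemma ι_mul_comm₂ {w : ExteriorAlgebra ℝ (Fin n → ℝ)} (hw : w ∈ ⋀[ℝ]^2 (Fin n → ℝ))
    (v : Fin n → ℝ) : ι ℝ v * w = w * ι ℝ v := by
  refine power_two_induction (fun w => ι ℝ v * w = w * ι ℝ v) (by simp) ?_ ?_ ?_ w hw
  · intro x y hx hy
    rw [mul_add, add_mul, hx, hy]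
  · intro c x hx
    rw [mul_smul_comm, smul_mul_assoc, hx]
  · intro a b
    rw [← mul_assoc, ι_anticomm v a, neg_mul, mul_assoc, ι_anticomm v b, mul_neg, neg_neg,
      ← mul_assoc]

lemma ctr_mem_range_ι (f : Module.Dual ℝ (Fin n → ℝ)) {w : ExteriorAlgebra ℝ (Fin n → ℝ)}
    (hw : w ∈ ⋀[ℝ]^2 (Fin n → ℝ)) : ∃ m, ctr f w = ι ℝ m := by
  refine power_two_induction (fun w => ∃ m, ctr f w = ι ℝ m) ⟨0, by simp⟩ ?_ ?_ ?_ w hw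
  · rintro x y ⟨mx, hx⟩ ⟨my, hy⟩
    exact ⟨mx + my, by rw [map_add, hx, hy, map_add]⟩
  · rintro c x ⟨m, hm⟩
    exact ⟨c • m, by rw [map_smul, hm, map_smul]⟩
  · intro a b
    exact ⟨f a • b - f b • a, by rw [ctr_ι_mul_ι, map_sub, map_smul, map_smul]⟩

lemma ctr_mul₂ (f : Module.Dual ℝ (Fin n → ℝ)) {w : ExteriorAlgebra ℝ (Fin n → ℝ)}
    (hw : w ∈ ⋀[ℝ]^2 (Fin n → ℝ)) (y : ExteriorAlgebra ℝ (Fin n → ℝ)) :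
    ctr f (w * y) = ctr f w * y + w * ctr f y := by
  refine power_two_induction (fun w => ∀ y, ctr f (w * y) = ctr f w * y + w * ctr f y)
    (by simp) ?_ ?_ ?_ w hw y
  · intro x y hx hy z
    rw [add_mul, map_add, hx, hy, map_add, add_mul, add_mul]
    abel
  · intro c x hx z
    rw [smul_mul_assoc, map_smul, hx, map_smul, smul_add, smul_mul_assoc, smul_mul_assoc]
  · intro a b z
    rw [mul_assoc, ctr_ι_mul, ctr_ι_mul, ctr_ι_mul_ι]
    simp only [mul_sub, sub_mul, smul_mul_assoc, mul_smul_comm, mul_assoc]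
    abel


/-- standard basis vectors -/
noncomputable abbrev sb (i : Fin n) : Fin n → ℝ := Pi.single i 1

lemma ι_eq_sum (x : Fin n → ℝ) : ι ℝ x = ∑ i, x i • ι ℝ (sb i) := by
  have hx : x = ∑ i, x i • sb i := by
    funext j
    simp [Pi.single_apply, Finset.sum_apply]
  conv_lhs => rw [hx]
  rw [map_sum]
  simp

lemma ι_mul_ι_eq_sum (x y : Fin n → ℝ) :
    ι ℝ x * ι ℝ y = ∑ i, ∑ j, (x i * y j) • (ι ℝ (sb i) * ι ℝ (sb j)) := by
  rw [ι_eq_sum x, ι_eq_sum y, Finset.sum_mul_sum]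
  refine Finset.sum_congr rfl fun i _ => Finset.sum_congr rfl fun j _ => ?_
  rw [smul_mul_assoc, mul_smul_comm, smul_smul]

/-- scalar extraction linear functional -/
noncomputable def scal {n : ℕ} (f g : Module.Dual ℝ (Fin n → ℝ)) :
    ExteriorAlgebra ℝ (Fin n → ℝ) →ₗ[ℝ] ℝ :=
  (ExteriorAlgebra.algebraMapInv).toLinearMap ∘ₗ ctr f ∘ₗ ctr g

lemma scal_ι_mul_ι (f g : Module.Dual ℝ (Fin n → ℝ)) (x y : Fin n → ℝ) :
    scal f g (ι ℝ x * ι ℝ y) = g x * f y - g y * f x := by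
  rw [scal]
  simp only [LinearMap.coe_comp, Function.comp_apply, AlgHom.toLinearMap_apply]
  rw [ctr_ctr_ι_mul_ι]
  exact ExteriorAlgebra.algebraMap_leftInverse _ _

/-- reconstruction of a 2-vector from its double contractions -/
lemma recon {w : ExteriorAlgebra ℝ (Fin n → ℝ)} (hw : w ∈ ⋀[ℝ]^2 (Fin n → ℝ)) :
    ∑ i, ∑ j, (scal (LinearMap.proj j) (LinearMap.proj i) w) • (ι ℝ (sb i) * ι ℝ (sb j))
      = (2 : ℝ) • w := by
  refine power_two_induction (fun w => ∑ i, ∑ j,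
      (scal (LinearMap.proj j) (LinearMap.proj i) w) • (ι ℝ (sb i) * ι ℝ (sb j)) = (2:ℝ) • w)
    (by simp) ?_ ?_ ?_ w hw
  · intro x y hx hy
    simp only [map_add, add_smul, Finset.sum_add_distrib, hx, hy, smul_add]
  · intro c x hx
    simp only [map_smul, smul_eq_mul, mul_smul, smul_comm _ c, ← Finset.smul_sum, hx]
  · intro a b
    have h1 : ∀ i j : Fin n, scal (LinearMap.proj j) (LinearMap.proj i) (ι ℝ a * ι ℝ b)
        = a i * b j - b i * a j := by
      intro i j; rw [scal_ι_mul_ι]; simp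
    simp only [h1, sub_smul, Finset.sum_sub_distrib, ← ι_mul_ι_eq_sum]
    rw [ι_anticomm b a, two_smul]
    abel

lemma exists_ctr_ne_zero {w : ExteriorAlgebra ℝ (Fin n → ℝ)} (hw : w ∈ ⋀[ℝ]^2 (Fin n → ℝ))
    (hne : w ≠ 0) : ∃ f : Module.Dual ℝ (Fin n → ℝ), ctr f w ≠ 0 := by
  by_contra h
  push_neg at h
  apply hne
  have := recon hw
  simp only [scal, LinearMap.coe_comp, Function.comp_apply, h, map_zero, zero_smul,
    Finset.sum_const_zero] at this
  have h2 : ((2:ℝ))⁻¹ • ((2:ℝ) • w) = 0 := by rw [← this]; simp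
  rwa [smul_smul, inv_mul_cancel₀ (by norm_num), one_smul] at h2


lemma exists_dual_family {k : ℕ} {v : Fin k → (Fin n → ℝ)} (hv : LinearIndependent ℝ v) :
    ∃ f : Fin k → Module.Dual ℝ (Fin n → ℝ), ∀ i j, f i (v j) = if i = j then 1 else 0 := by
  have h1 := hv.linearIndepOn_id
  let B := Module.Basis.extend h1
  have hsub : Set.range v ⊆ h1.extend (Set.subset_univ _) := h1.subset_extend _
  refine ⟨fun i => B.coord ⟨v i, hsub ⟨i, rfl⟩⟩, fun i j => ?_⟩
  have hBj : B ⟨v j, hsub ⟨j, rfl⟩⟩ = v j := Module.Basis.extend_apply_self _ _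
  rw [← hBj, Module.Basis.coord_apply, Module.Basis.repr_self, Finsupp.single_apply]
  simp only [Subtype.mk.injEq]
  by_cases h : i = j
  · subst h; simp
  · rw [if_neg (fun hh => h (hv.injective hh.symm)), if_neg h]

lemma pair_coeffs {a b : Fin n → ℝ} (h : LinearIndependent ℝ ![a, b]) {s t : ℝ}
    (hst : s • a + t • b = 0) : s = 0 ∧ t = 0 := by
  have := Fintype.linearIndependent_iff.mp h ![s, t] (by
    simp [Fin.sum_univ_two, hst])
  exact ⟨this 0, this 1⟩

lemma ι_mul_ι_ne_zero {a b : Fin n → ℝ} (h : LinearIndependent ℝ ![a, b]) :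
    ι ℝ a * ι ℝ b ≠ 0 := by
  obtain ⟨f, hf⟩ := exists_dual_family h
  intro h0
  have h1 : scal (f 1) (f 0) (ι ℝ a * ι ℝ b) = 1 := by
    rw [scal_ι_mul_ι]
    have e00 := hf 0 0; have e10 := hf 1 0; have e01 := hf 0 1; have e11 := hf 1 1
    simp only [Matrix.cons_val_zero, Matrix.cons_val_one, Matrix.head_cons] at e00 e10 e01 e11
    simp [e00, e10, e01, e11]
  rw [h0, map_zero] at h1
  norm_num at h1

lemma pair_dep_mul_zero {a b : Fin n → ℝ} (h : ¬ LinearIndependent ℝ ![a, b]) :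
    ι ℝ a * ι ℝ b = 0 := by
  obtain ⟨g, hsum, i, hi⟩ := Fintype.not_linearIndependent_iff.mp h
  rw [Fin.sum_univ_two] at hsum
  simp only [Matrix.cons_val_zero, Matrix.cons_val_one, Matrix.head_cons] at hsum
  have h1 : ι ℝ a * ι ℝ (g 0 • a + g 1 • b) = g 1 • (ι ℝ a * ι ℝ b) := by
    rw [map_add, map_smul, map_smul, mul_add, mul_smul_comm, mul_smul_comm,
      ι_sq_zero, smul_zero, zero_add]
  have h2 : ι ℝ (g 0 • a + g 1 • b) * ι ℝ b = g 0 • (ι ℝ a * ι ℝ b) := by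
    rw [map_add, map_smul, map_smul, add_mul, smul_mul_assoc, smul_mul_assoc,
      ι_sq_zero, smul_zero, add_zero]
  rw [hsum, map_zero, mul_zero] at h1
  rw [hsum, map_zero, zero_mul] at h2
  fin_cases i
  · exact (smul_eq_zero.mp h2.symm).resolve_left hi
  · exact (smul_eq_zero.mp h1.symm).resolve_left hi

lemma quad_ne_zero {a b c d : Fin n → ℝ} (h : LinearIndependent ℝ ![a, b, c, d]) :
    ι ℝ a * ι ℝ b * (ι ℝ c * ι ℝ d) ≠ 0 := by
  obtain ⟨f, hf⟩ := exists_dual_family h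
  have hv : ∀ i, (f i a = if i = 0 then 1 else 0) ∧ (f i b = if i = 1 then 1 else 0)
      ∧ (f i c = if i = 2 then 1 else 0) ∧ (f i d = if i = 3 then 1 else 0) := by
    intro i
    have h0 := hf i 0; have h1 := hf i 1; have h2 := hf i 2; have h3 := hf i 3
    simp only [Matrix.cons_val_zero, Matrix.cons_val_one, Matrix.head_cons,
      Matrix.cons_val_two, Matrix.cons_val_three, Matrix.tail_cons] at h0 h1 h2 h3
    exact ⟨h0, h1, h2, h3⟩
  intro h0
  obtain ⟨f0a, f0b, f0c, f0d⟩ := hv 0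
  obtain ⟨f1a, f1b, f1c, f1d⟩ := hv 1
  obtain ⟨f2a, f2b, f2c, f2d⟩ := hv 2
  obtain ⟨f3a, f3b, f3c, f3d⟩ := hv 3
  norm_num at f0a f0b f0c f0d f1a f1b f1c f1d f2a f2b f2c f2d f3a f3b f3c f3d
  have cιd : ∀ g : Module.Dual ℝ (Fin n → ℝ), ∀ x : Fin n → ℝ, g x = 0 →
      ctr g (ι ℝ x) = 0 := fun g x hx => by rw [ctr_ι, hx, map_zero]
  have s0 : ctr (f 0) (ι ℝ a * (ι ℝ b * (ι ℝ c * ι ℝ d))) = ι ℝ b * (ι ℝ c * ι ℝ d) :=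
    ctr_ι_mul_of_one _ f0a (ctr_ι_mul_of_zero _ f0b (ctr_ι_mul_of_zero _ f0c (cιd _ _ f0d)))
  have s1 : ctr (f 1) (ι ℝ b * (ι ℝ c * ι ℝ d)) = ι ℝ c * ι ℝ d :=
    ctr_ι_mul_of_one _ f1b (ctr_ι_mul_of_zero _ f1c (cιd _ _ f1d))
  have s2 : ctr (f 2) (ι ℝ c * ι ℝ d) = ι ℝ d :=
    ctr_ι_mul_of_one _ f2c (cιd _ _ f2d)
  have s3 : ctr (f 3) (ι ℝ d) = 1 := by rw [ctr_ι, f3d, map_one]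
  rw [mul_assoc] at h0
  rw [h0, map_zero] at s0
  rw [← s0, map_zero] at s1
  rw [← s1, map_zero] at s2
  rw [← s2, map_zero] at s3
  exact one_ne_zero s3.symm

lemma exists_common {a b c d : Fin n → ℝ} (hab : LinearIndependent ℝ ![a, b])
    (hcd : LinearIndependent ℝ ![c, d]) (h : ι ℝ a * ι ℝ b * (ι ℝ c * ι ℝ d) = 0) :
    ∃ z : Fin n → ℝ, z ≠ 0 ∧ z ∈ Submodule.span ℝ {a, b} ∧ z ∈ Submodule.span ℝ {c, d} := by
  have hdep : ¬ LinearIndependent ℝ ![a, b, c, d] := fun hli => quad_ne_zero hli h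
  obtain ⟨g, hsum, i, hi⟩ := Fintype.not_linearIndependent_iff.mp hdep
  rw [Fin.sum_univ_four] at hsum
  simp only [Matrix.cons_val_zero, Matrix.cons_val_one, Matrix.head_cons,
    Matrix.cons_val_two, Matrix.cons_val_three, Matrix.tail_cons] at hsum
  refine ⟨g 0 • a + g 1 • b, ?_, Submodule.mem_span_pair.mpr ⟨g 0, g 1, rfl⟩,
    Submodule.mem_span_pair.mpr ⟨-(g 2), -(g 3), by
      rw [neg_smul, neg_smul, ← neg_add]
      exact (eq_neg_of_add_eq_zero_left (by rw [← hsum]; abel)).symm⟩⟩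
  intro hz
  rw [hz, zero_add] at hsum
  obtain ⟨h0, h1⟩ := pair_coeffs hab hz
  obtain ⟨h2, h3⟩ := pair_coeffs hcd hsum
  fin_cases i <;> simp_all

lemma factor_through {a b z : Fin n → ℝ} (hz : z ≠ 0)
    (hmem : z ∈ Submodule.span ℝ ({a, b} : Set (Fin n → ℝ))) :
    ∃ v : Fin n → ℝ, ι ℝ a * ι ℝ b = ι ℝ z * ι ℝ v := by
  obtain ⟨p, q, hpq⟩ := Submodule.mem_span_pair.mp hmem
  by_cases hp : p = 0
  · have hq : q ≠ 0 := by
      intro hq; apply hz; rw [← hpq, hp, hq, zero_smul, zero_smul, add_zero]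
    refine ⟨-(q⁻¹) • a, ?_⟩
    rw [← hpq, hp, zero_smul, zero_add, map_smul, map_smul, smul_mul_assoc, mul_smul_comm,
      smul_smul, ι_anticomm b a, smul_neg, mul_neg, mul_inv_cancel₀ hq, neg_smul, one_smul,
      neg_neg]
  · refine ⟨p⁻¹ • b, ?_⟩
    rw [← hpq, map_add, map_smul, map_smul, map_smul, add_mul, smul_mul_assoc, smul_mul_assoc,
      mul_smul_comm, mul_smul_comm, ι_sq_zero, smul_zero, smul_zero, add_zero, smul_smul,
      mul_inv_cancel₀ hp, one_smul]

lemma plane_change {a b u v : Fin n → ℝ} (hu : u ∈ Submodule.span ℝ ({a, b} : Set (Fin n → ℝ)))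
    (hv : v ∈ Submodule.span ℝ ({a, b} : Set (Fin n → ℝ))) :
    ∃ μ : ℝ, ι ℝ u * ι ℝ v = μ • (ι ℝ a * ι ℝ b) := by
  obtain ⟨p, q, hpq⟩ := Submodule.mem_span_pair.mp hu
  obtain ⟨r, s, hrs⟩ := Submodule.mem_span_pair.mp hv
  refine ⟨p * s - q * r, ?_⟩
  rw [← hpq, ← hrs]
  simp only [map_add, map_smul, add_mul, mul_add, smul_mul_assoc, mul_smul_comm, smul_smul,
    ι_sq_zero, smul_zero, add_zero, zero_add]
  rw [ι_anticomm b a]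
  module

lemma decomp {w : ExteriorAlgebra ℝ (Fin n → ℝ)} (hw : w ∈ ⋀[ℝ]^2 (Fin n → ℝ))
    (hsq : w * w = 0) : ∃ a b : Fin n → ℝ, w = ι ℝ a * ι ℝ b := by
  by_cases hne : w = 0
  · exact ⟨0, 0, by rw [hne, map_zero, zero_mul]⟩
  obtain ⟨f, hf⟩ := exists_ctr_ne_zero hw hne
  obtain ⟨m, hm⟩ := ctr_mem_range_ι f hw
  have hmw : ι ℝ m * w = 0 := by
    have h1 : ctr f (w * w) = ι ℝ m * w + ι ℝ m * w := by
      rw [ctr_mul₂ f hw, hm, ι_mul_comm₂ hw m]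
    rw [hsq, map_zero] at h1
    have h2 : (2:ℝ) • (ι ℝ m * w) = 0 := by rw [two_smul]; exact h1.symm
    exact (smul_eq_zero.mp h2).resolve_left two_ne_zero
  have hm0 : m ≠ 0 := by
    intro h0; apply hf; rw [hm, h0, map_zero]
  obtain ⟨i, hi⟩ : ∃ i, m i ≠ 0 := by
    by_contra hc; push_neg at hc; exact hm0 (funext fun i => hc i)
  set g : Module.Dual ℝ (Fin n → ℝ) := (m i)⁻¹ • LinearMap.proj i with hg
  have hgm : g m = 1 := by
    simp [hg, inv_mul_cancel₀ hi]
  obtain ⟨b, hb⟩ := ctr_mem_range_ι g hw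
  refine ⟨m, b, ?_⟩
  have h2 := ctr_ι_mul g m w
  rw [hmw, map_zero, hgm, one_smul, hb] at h2
  exact sub_eq_zero.mp h2.symm


end HM

open ExteriorAlgebra HM

lemma dep_pair {n : ℕ} {x y : Fin n → ℝ} (hx : x ≠ 0)
    (h : ¬ LinearIndependent ℝ ![x, y]) : ∃ μ : ℝ, y = μ • x := by
  obtain ⟨g, hsum, i, hi⟩ := Fintype.not_linearIndependent_iff.mp h
  rw [Fin.sum_univ_two] at hsum
  simp only [Matrix.cons_val_zero, Matrix.cons_val_one, Matrix.head_cons] at hsum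
  by_cases hg1 : g 1 = 0
  · exfalso
    rw [hg1, zero_smul, add_zero] at hsum
    have hg0 : g 0 = 0 ∨ x = 0 := smul_eq_zero.mp hsum
    fin_cases i
    · exact hi (hg0.resolve_right hx)
    · exact hi hg1
  · refine ⟨-(g 0) / g 1, ?_⟩
    have h1 : g 1 • y = -(g 0 • x) := eq_neg_of_add_eq_zero_left (by rw [← hsum]; abel)
    have h2 := congrArg (fun z => (g 1)⁻¹ • z) h1
    simp only [smul_smul, inv_mul_cancel₀ hg1, one_smul] at h2
    rw [h2, smul_neg, smul_smul, div_eq_mul_inv, neg_mul, mul_comm, neg_smul]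

lemma range_three {α : Type*} (x y z : α) : Set.range ![x, y, z] = {x, y, z} := by
  rw [Matrix.range_cons, Matrix.range_cons_cons_empty, Set.singleton_union]


set_option maxHeartbeats 1000000 in
set_option synthInstance.maxHeartbeats 400000 in

/-- **Hilton–Milner for 2-forms (equality case).** If `n ≥ 5` and `W` is a
self-annihilating subspace of `Λ²(ℝⁿ)` such that there is no vector `a ∈ ℝⁿ`
with every element of `W` of the form `a ∧ v`, then `dim W = 3` holds if and
only if `W` is the span of `x₁ ∧ x₂, x₂ ∧ x₃, x₃ ∧ x₁` for some linearly
independent vectors `x₁, x₂, x₃ ∈ ℝⁿ`. -/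
theorem hilton_milner_two_forms_eq_iff (n : ℕ) (hn : 5 ≤ n)
    (W : Submodule ℝ (ExteriorAlgebra ℝ (Fin n → ℝ)))
    (hW2 : W ≤ ⋀[ℝ]^2 (Fin n → ℝ))
    (hann : ∀ w₁ ∈ W, ∀ w₂ ∈ W, w₁ * w₂ = 0)
    (hnota : ¬ ∃ a : Fin n → ℝ, ∀ w ∈ W, ∃ v : Fin n → ℝ,
      w = ExteriorAlgebra.ι ℝ a * ExteriorAlgebra.ι ℝ v) :
    Module.finrank ℝ W = 3 ↔
      ∃ x₁ x₂ x₃ : Fin n → ℝ, LinearIndependent ℝ ![x₁, x₂, x₃] ∧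
        W = Submodule.span ℝ
          {ExteriorAlgebra.ι ℝ x₁ * ExteriorAlgebra.ι ℝ x₂,
           ExteriorAlgebra.ι ℝ x₂ * ExteriorAlgebra.ι ℝ x₃,
           ExteriorAlgebra.ι ℝ x₃ * ExteriorAlgebra.ι ℝ x₁} := by
  constructor
  · -- forward direction
    intro h3
    have hfin : Module.Finite ℝ W := Module.finite_of_finrank_pos (by rw [h3]; norm_num)
    let bW := Module.finBasisOfFinrankEq ℝ W h3
    set w : Fin 3 → ExteriorAlgebra ℝ (Fin n → ℝ) := fun i => (bW i : _) with hwdef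
    have hwiW : ∀ i, w i ∈ W := fun i => (bW i).2
    have hwi2 : ∀ i, w i ∈ ⋀[ℝ]^2 (Fin n → ℝ) := fun i => hW2 (hwiW i)
    have hwi0 : ∀ i, w i ≠ 0 := by
      intro i h0
      exact bW.ne_zero i (by ext; exact h0)
    have hdec : ∀ i, ∃ a b : Fin n → ℝ, w i = ι ℝ a * ι ℝ b :=
      fun i => decomp (hwi2 i) (hann _ (hwiW i) _ (hwiW i))
    choose a b hab using hdec
    have hliab : ∀ i, LinearIndependent ℝ ![a i, b i] := by
      intro i
      by_contra h
      exact hwi0 i (by rw [hab i, pair_dep_mul_zero h])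
    set P : Fin 3 → Submodule ℝ (Fin n → ℝ) := fun i => Submodule.span ℝ {a i, b i} with hPdef
    have hrepr : ∀ u ∈ W, ∃ t : Fin 3 → ℝ, u = ∑ i, t i • w i := by
      intro u hu
      refine ⟨fun i => bW.repr ⟨u, hu⟩ i, ?_⟩
      have h1 := bW.sum_repr ⟨u, hu⟩
      have h2 := congrArg (W.subtype) h1
      rw [map_sum] at h2
      simp only [map_smul] at h2
      exact h2.symm
    have hcontra : ∀ z : Fin n → ℝ, z ≠ 0 → (∀ i, z ∈ P i) → False := by
      intro z hz hmem
      apply hnota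
      refine ⟨z, fun u hu => ?_⟩
      obtain ⟨t, ht⟩ := hrepr u hu
      choose v hv using fun i => factor_through hz (hmem i)
      refine ⟨∑ i, t i • v i, ?_⟩
      rw [ht]
      rw [map_sum, Finset.mul_sum]
      refine Finset.sum_congr rfl fun i _ => ?_
      rw [map_smul, mul_smul_comm, hab i, hv i]
    have hint : ∀ i j, w i * w j = 0 → ∃ z, z ≠ 0 ∧ z ∈ P i ∧ z ∈ P j := by
      intro i j hij
      refine exists_common (hliab i) (hliab j) ?_
      rw [← hab i, ← hab j]
      exact hij
    obtain ⟨c, hc0, hcP0, hcP1⟩ := hint 0 1 (hann _ (hwiW 0) _ (hwiW 1))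
    by_cases hcase : ∃ z, z ≠ 0 ∧ z ∈ P 0 ∧ z ∈ P 1 ∧ z ∈ P 2
    · obtain ⟨z, hz0, hz1, hz2, hz3⟩ := hcase
      exact absurd (fun i => by fin_cases i <;> assumption) (fun h => hcontra z hz0 h)
    · obtain ⟨u, hu0, huP2, huP0⟩ := hint 2 0 (hann _ (hwiW 2) _ (hwiW 0))
      obtain ⟨v, hv0, hvP2, hvP1⟩ := hint 2 1 (hann _ (hwiW 2) _ (hwiW 1))
      have hcu : LinearIndependent ℝ ![c, u] := by
        by_contra h
        obtain ⟨μ, rfl⟩ := dep_pair hc0 h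
        exact hcase ⟨μ • c, hu0, Submodule.smul_mem _ _ hcP0, Submodule.smul_mem _ _ hcP1, huP2⟩
      have hcv : LinearIndependent ℝ ![c, v] := by
        by_contra h
        obtain ⟨μ, rfl⟩ := dep_pair hc0 h
        exact hcase ⟨μ • c, hv0, Submodule.smul_mem _ _ hcP0, hvP1, hvP2⟩
      have huv : LinearIndependent ℝ ![u, v] := by
        by_contra h
        obtain ⟨μ, rfl⟩ := dep_pair hu0 h
        exact hcase ⟨μ • u, hv0, Submodule.smul_mem _ _ huP0, hvP1, hvP2⟩
      have htriple : LinearIndependent ℝ ![c, u, v] := by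
        rw [Fintype.linearIndependent_iff]
        intro t ht
        rw [Fin.sum_univ_three] at ht
        simp only [Matrix.cons_val_zero, Matrix.cons_val_one, Matrix.head_cons,
          Matrix.cons_val_two, Matrix.tail_cons] at ht
        by_cases ht2 : t 2 = 0
        · rw [ht2, zero_smul, add_zero] at ht
          obtain ⟨h0, h1⟩ := pair_coeffs hcu ht
          intro i; fin_cases i <;> assumption
        · exfalso
          have h1 : t 2 • v = -(t 0 • c + t 1 • u) :=
            eq_neg_of_add_eq_zero_left (by rw [← ht]; abel)
          have h2 : t 2 • v ∈ P 0 := by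
            rw [h1]
            exact Submodule.neg_mem _ (Submodule.add_mem _
              (Submodule.smul_mem _ _ hcP0) (Submodule.smul_mem _ _ huP0))
          have h3 : v ∈ P 0 := by
            have := Submodule.smul_mem (P 0) (t 2)⁻¹ h2
            rwa [smul_smul, inv_mul_cancel₀ ht2, one_smul] at this
          exact hcase ⟨v, hv0, h3, hvP1, hvP2⟩
      obtain ⟨μ₀, hμ₀⟩ := plane_change (a := a 0) (b := b 0) hcP0 huP0
      obtain ⟨μ₁, hμ₁⟩ := plane_change (a := a 1) (b := b 1) hcP1 hvP1
      obtain ⟨μ₂, hμ₂⟩ := plane_change (a := a 2) (b := b 2) huP2 hvP2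
      have hμ₀0 : μ₀ ≠ 0 := by
        intro h0; exact ι_mul_ι_ne_zero hcu (by rw [hμ₀, h0, zero_smul])
      have hμ₁0 : μ₁ ≠ 0 := by
        intro h0; exact ι_mul_ι_ne_zero hcv (by rw [hμ₁, h0, zero_smul])
      have hμ₂0 : μ₂ ≠ 0 := by
        intro h0; exact ι_mul_ι_ne_zero huv (by rw [hμ₂, h0, zero_smul])
      have hw0 : w 0 = μ₀⁻¹ • (ι ℝ c * ι ℝ u) := by
        rw [hμ₀, smul_smul, inv_mul_cancel₀ hμ₀0, one_smul, hab 0]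
      have hw1 : w 1 = μ₁⁻¹ • (ι ℝ c * ι ℝ v) := by
        rw [hμ₁, smul_smul, inv_mul_cancel₀ hμ₁0, one_smul, hab 1]
      have hw2 : w 2 = μ₂⁻¹ • (ι ℝ u * ι ℝ v) := by
        rw [hμ₂, smul_smul, inv_mul_cancel₀ hμ₂0, one_smul, hab 2]
      refine ⟨c, u, v, htriple, ?_⟩
      set S : Set (ExteriorAlgebra ℝ (Fin n → ℝ)) :=
        {ι ℝ c * ι ℝ u, ι ℝ u * ι ℝ v, ι ℝ v * ι ℝ c} with hSdef
      have hg1 : ι ℝ c * ι ℝ u ∈ Submodule.span ℝ S :=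
        Submodule.subset_span (by left; rfl)
      have hg2 : ι ℝ u * ι ℝ v ∈ Submodule.span ℝ S :=
        Submodule.subset_span (by right; left; rfl)
      have hg3 : ι ℝ v * ι ℝ c ∈ Submodule.span ℝ S :=
        Submodule.subset_span (by right; right; rfl)
      have hwmem : ∀ i, w i ∈ Submodule.span ℝ S := by
        intro i
        fin_cases i
        · show w 0 ∈ _
          rw [hw0]; exact Submodule.smul_mem _ _ hg1
        · show w 1 ∈ _
          rw [hw1, ι_anticomm c v]
          exact Submodule.smul_mem _ _ (Submodule.neg_mem _ hg3)
        · show w 2 ∈ _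
          rw [hw2]; exact Submodule.smul_mem _ _ hg2
      refine le_antisymm ?_ ?_
      · intro x hx
        obtain ⟨t, ht⟩ := hrepr x hx
        rw [ht]
        exact Submodule.sum_mem _ fun i _ => Submodule.smul_mem _ _ (hwmem i)
      · rw [Submodule.span_le]
        rintro x (rfl | rfl | rfl)
        · rw [hμ₀, ← hab 0]
          exact Submodule.smul_mem _ _ (hwiW 0)
        · rw [hμ₂, ← hab 2]
          exact Submodule.smul_mem _ _ (hwiW 2)
        · rw [ι_anticomm v c, hμ₁, ← hab 1, ← neg_smul]
          exact Submodule.smul_mem _ _ (hwiW 1)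
  · -- reverse direction
    rintro ⟨x₁, x₂, x₃, hx, rfl⟩
    obtain ⟨f, hf⟩ := exists_dual_family hx
    have hv : ∀ i : Fin 3, (f i x₁ = if i = 0 then 1 else 0)
        ∧ (f i x₂ = if i = 1 then 1 else 0) ∧ (f i x₃ = if i = 2 then 1 else 0) := by
      intro i
      have h0 := hf i 0; have h1 := hf i 1; have h2 := hf i 2
      simp only [Matrix.cons_val_zero, Matrix.cons_val_one, Matrix.head_cons,
        Matrix.cons_val_two, Matrix.tail_cons] at h0 h1 h2
      exact ⟨h0, h1, h2⟩
    have f01 : f 0 x₁ = 1 := by rw [(hv 0).1, if_pos rfl]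
    have f02 : f 0 x₂ = 0 := by rw [(hv 0).2.1, if_neg (by decide)]
    have f03 : f 0 x₃ = 0 := by rw [(hv 0).2.2, if_neg (by decide)]
    have f11 : f 1 x₁ = 0 := by rw [(hv 1).1, if_neg (by decide)]
    have f12 : f 1 x₂ = 1 := by rw [(hv 1).2.1, if_pos rfl]
    have f13 : f 1 x₃ = 0 := by rw [(hv 1).2.2, if_neg (by decide)]
    have f21 : f 2 x₁ = 0 := by rw [(hv 2).1, if_neg (by decide)]
    have f22 : f 2 x₂ = 0 := by rw [(hv 2).2.1, if_neg (by decide)]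
    have f23 : f 2 x₃ = 1 := by rw [(hv 2).2.2, if_pos rfl]
    set g1 := ι ℝ x₁ * ι ℝ x₂ with hg1
    set g2 := ι ℝ x₂ * ι ℝ x₃ with hg2
    set g3 := ι ℝ x₃ * ι ℝ x₁ with hg3
    have li : LinearIndependent ℝ ![g1, g2, g3] := by
      rw [Fintype.linearIndependent_iff]
      intro t ht
      rw [Fin.sum_univ_three] at ht
      simp only [Matrix.cons_val_zero, Matrix.cons_val_one, Matrix.head_cons,
        Matrix.cons_val_two, Matrix.tail_cons] at ht
      have key : ∀ p q : Fin 3, scal (f q) (f p) (t 0 • g1 + t 1 • g2 + t 2 • g3)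
          = t 0 * scal (f q) (f p) g1 + t 1 * scal (f q) (f p) g2
            + t 2 * scal (f q) (f p) g3 := by
        intro p q
        rw [map_add, map_add, map_smul, map_smul, map_smul]
        simp only [smul_eq_mul]
      have e0 := key 0 1
      have e1 := key 1 2
      have e2 := key 2 0
      rw [ht, map_zero, hg1, hg2, hg3] at e0 e1 e2
      rw [scal_ι_mul_ι, scal_ι_mul_ι, scal_ι_mul_ι] at e0 e1 e2
      rw [f01, f02, f03, f11, f12, f13] at e0
      rw [f11, f12, f13, f21, f22, f23] at e1
      rw [f21, f22, f23, f01, f02, f03] at e2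
      norm_num at e0 e1 e2
      intro i
      fin_cases i
      · exact e0.symm
      · exact e1.symm
      · exact e2.symm
    have hrange : ({g1, g2, g3} : Set (ExteriorAlgebra ℝ (Fin n → ℝ)))
        = Set.range ![g1, g2, g3] := (range_three g1 g2 g3).symm
    rw [hrange, finrank_span_eq_card li]
    simp
end

section
/- Let w be an element of Λ²(ℝⁿ) (an alternating 2-vector over ℝⁿ). If w ∧ w = 0, then w is decomposable, i.e., w = v₁ ∧ v₂ for some vectors v₁, v₂ ∈ ℝⁿ. -/
open ExteriorAlgebra

section General

variable {M : Type*} [AddCommGroup M] [Module ℝ M]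

/-- Contraction of an element of the exterior algebra by a dual vector. -/
noncomputable def ctr (f : Module.Dual ℝ M) :
    ExteriorAlgebra ℝ M →ₗ[ℝ] ExteriorAlgebra ℝ M :=
  CliffordAlgebra.contractLeft f

lemma ctr_gen (f : Module.Dual ℝ M) (a b : M) :
    ctr f (ExteriorAlgebra.ι ℝ a * ExteriorAlgebra.ι ℝ b)
      = ExteriorAlgebra.ι ℝ (f a • b - f b • a) := by
  rw [ctr, CliffordAlgebra.contractLeft_ι_mul, CliffordAlgebra.contractLeft_ι,
    ← Algebra.commutes, ← Algebra.smul_def, map_sub, map_smul, map_smul]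

lemma ctr_mem (f : Module.Dual ℝ M) (w : ExteriorAlgebra ℝ M)
    (hw : w ∈ ⋀[ℝ]^2 M) : ∃ u : M, ctr f w = ExteriorAlgebra.ι ℝ u := by
  rw [exteriorPower, pow_two] at hw
  refine Submodule.mul_induction_on hw ?_ ?_
  · rintro _ ⟨a, rfl⟩ _ ⟨b, rfl⟩
    exact ⟨f a • b - f b • a, ctr_gen f a b⟩
  · rintro x y ⟨u, hu⟩ ⟨v, hv⟩
    exact ⟨u + v, by rw [map_add, hu, hv, map_add]⟩

lemma ctr_derivation (f : Module.Dual ℝ M) (w : ExteriorAlgebra ℝ M)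
    (hw : w ∈ ⋀[ℝ]^2 M) (x : ExteriorAlgebra ℝ M) :
    ctr f (w * x) = ctr f w * x + w * ctr f x := by
  rw [exteriorPower, pow_two] at hw
  refine Submodule.mul_induction_on hw ?_ ?_
  · rintro _ ⟨a, rfl⟩ _ ⟨b, rfl⟩
    rw [ctr_gen, map_sub, map_smul, map_smul, ctr, mul_assoc,
      CliffordAlgebra.contractLeft_ι_mul, CliffordAlgebra.contractLeft_ι_mul]
    simp only [mul_sub, sub_mul, smul_mul_assoc, mul_smul_comm, smul_sub, mul_assoc]
    abel
  · rintro x' y' hx hy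
    rw [add_mul, map_add, hx, hy, map_add, add_mul, add_mul]
    abel

lemma even_comm (w : ExteriorAlgebra ℝ M) (hw : w ∈ ⋀[ℝ]^2 M) (a : M) :
    ExteriorAlgebra.ι ℝ a * w = w * ExteriorAlgebra.ι ℝ a := by
  rw [exteriorPower, pow_two] at hw
  refine Submodule.mul_induction_on hw ?_ ?_
  · rintro _ ⟨x, rfl⟩ _ ⟨y, rfl⟩
    have h1 : ExteriorAlgebra.ι ℝ a * ExteriorAlgebra.ι ℝ x
        = -(ExteriorAlgebra.ι ℝ x * ExteriorAlgebra.ι ℝ a) :=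
      eq_neg_of_add_eq_zero_left (ExteriorAlgebra.ι_add_mul_swap a x)
    have h2 : ExteriorAlgebra.ι ℝ a * ExteriorAlgebra.ι ℝ y
        = -(ExteriorAlgebra.ι ℝ y * ExteriorAlgebra.ι ℝ a) :=
      eq_neg_of_add_eq_zero_left (ExteriorAlgebra.ι_add_mul_swap a y)
    rw [← mul_assoc, h1, neg_mul, mul_assoc, h2, mul_neg, neg_neg, mul_assoc]
  · rintro x y hx hy
    rw [mul_add, hx, hy, add_mul]

end General

section Coord

variable {n : ℕ}

local notation "e" i => (Pi.single i 1 : Fin n → ℝ)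

lemma coord_rep (w : ExteriorAlgebra ℝ (Fin n → ℝ)) (hw : w ∈ ⋀[ℝ]^2 (Fin n → ℝ)) :
    ∃ c : Fin n → Fin n → ℝ, w = ∑ i, ∑ j, c i j •
      (ExteriorAlgebra.ι ℝ (e i) * ExteriorAlgebra.ι ℝ (e j)) := by
  rw [exteriorPower, pow_two] at hw
  refine Submodule.mul_induction_on hw ?_ ?_
  · rintro _ ⟨a, rfl⟩ _ ⟨b, rfl⟩
    refine ⟨fun i j => a i * b j, ?_⟩
    have ha : (a : Fin n → ℝ) = ∑ i, a i • (e i) := by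
      conv_lhs => rw [← Finset.univ_sum_single a]
      refine Finset.sum_congr rfl fun i _ => ?_
      rw [← Pi.single_smul, smul_eq_mul, mul_one]
    have hb : (b : Fin n → ℝ) = ∑ j, b j • (e j) := by
      conv_lhs => rw [← Finset.univ_sum_single b]
      refine Finset.sum_congr rfl fun j _ => ?_
      rw [← Pi.single_smul, smul_eq_mul, mul_one]
    conv_lhs => rw [ha, hb]
    rw [map_sum, map_sum, Finset.sum_mul_sum]
    refine Finset.sum_congr rfl fun i _ => Finset.sum_congr rfl fun j _ => ?_
    rw [map_smul, map_smul, smul_mul_smul_comm]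
  · rintro x y ⟨c₁, hc₁⟩ ⟨c₂, hc₂⟩
    refine ⟨c₁ + c₂, ?_⟩
    rw [hc₁, hc₂, ← Finset.sum_add_distrib]
    refine Finset.sum_congr rfl fun i _ => ?_
    rw [← Finset.sum_add_distrib]
    refine Finset.sum_congr rfl fun j _ => ?_
    rw [Pi.add_apply, Pi.add_apply, add_smul]

lemma all_ctr_zero (w : ExteriorAlgebra ℝ (Fin n → ℝ)) (hw : w ∈ ⋀[ℝ]^2 (Fin n → ℝ))
    (h : ∀ k : Fin n, ctr (LinearMap.proj k) w = 0) : w = 0 := by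
  obtain ⟨c, rfl⟩ := coord_rep w hw
  -- compute the contraction
  have hsym : ∀ k l, c k l = c l k := by
    intro k l
    have hk := h k
    rw [map_sum] at hk
    simp only [map_sum, map_smul, ctr_gen] at hk
    have : ∑ i, ∑ j, c i j • (((LinearMap.proj k : (Fin n → ℝ) →ₗ[ℝ] ℝ) (e i)) • (e j)
        - ((LinearMap.proj k : (Fin n → ℝ) →ₗ[ℝ] ℝ) (e j)) • (e i)) = 0 := by
      apply ExteriorAlgebra.ι_inj ℝ _ 0 |>.mp
      rw [map_sum, map_zero]
      rw [← hk]
      refine Finset.sum_congr rfl fun i _ => ?_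
      rw [map_sum]
      refine Finset.sum_congr rfl fun j _ => ?_
      rw [map_smul]
    have hl := congrFun this l
    simp only [Finset.sum_apply, Pi.smul_apply, Pi.sub_apply, Pi.zero_apply,
      LinearMap.proj_apply, Pi.single_apply, smul_eq_mul] at hl
    simp only [mul_ite, mul_one, mul_zero, ite_smul, one_smul, zero_smul] at hl
    simp only [mul_sub, Finset.sum_sub_distrib, mul_ite, mul_one, mul_zero,
      Finset.sum_ite_eq, Finset.sum_ite_eq', Finset.mem_univ, if_true] at hl
    rw [Finset.sum_comm] at hl
    simp only [Finset.sum_ite_eq, Finset.sum_ite_eq', Finset.mem_univ, if_true] at hl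
    linarith
  have hswap : (∑ i, ∑ j, c i j • (ExteriorAlgebra.ι ℝ (e i) * ExteriorAlgebra.ι ℝ (e j)))
      = ∑ i, ∑ j, c i j • (ExteriorAlgebra.ι ℝ (e j) * ExteriorAlgebra.ι ℝ (e i)) := by
    rw [Finset.sum_comm]
    refine Finset.sum_congr rfl fun i _ => Finset.sum_congr rfl fun j _ => ?_
    rw [hsym i j]
  have hdouble : (∑ i, ∑ j, c i j • (ExteriorAlgebra.ι ℝ (e i) * ExteriorAlgebra.ι ℝ (e j)))
      + (∑ i, ∑ j, c i j • (ExteriorAlgebra.ι ℝ (e i) * ExteriorAlgebra.ι ℝ (e j))) = 0 := by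
    nth_rewrite 2 [hswap]
    rw [← Finset.sum_add_distrib]
    rw [Finset.sum_eq_zero]
    intro i _
    rw [← Finset.sum_add_distrib]
    rw [Finset.sum_eq_zero]
    intro j _
    rw [← smul_add, ExteriorAlgebra.ι_add_mul_swap, smul_zero]
  have h2 : (2 : ℝ) • (∑ i, ∑ j, c i j •
      (ExteriorAlgebra.ι ℝ (e i) * ExteriorAlgebra.ι ℝ (e j))) = 0 := by
    rw [two_smul]; exact hdouble
  exact (smul_eq_zero.mp h2).resolve_left two_ne_zero

end Coord

/-- A 2-vector `w ∈ Λ²(ℝⁿ)` with `w ∧ w = 0` is decomposable, i.e.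
`w = v₁ ∧ v₂` for some vectors `v₁, v₂ ∈ ℝⁿ`. -/
theorem two_form_sq_zero_decomposable (n : ℕ)
    (w : ExteriorAlgebra ℝ (Fin n → ℝ)) (hw : w ∈ ⋀[ℝ]^2 (Fin n → ℝ))
    (hsq : w * w = 0) :
    ∃ v₁ v₂ : Fin n → ℝ, w = ExteriorAlgebra.ι ℝ v₁ * ExteriorAlgebra.ι ℝ v₂ := by
  by_cases hall : ∀ k : Fin n, ctr (LinearMap.proj k) w = 0
  · exact ⟨0, 0, by rw [all_ctr_zero w hw hall, map_zero, zero_mul]⟩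
  push_neg at hall
  obtain ⟨k, hk⟩ := hall
  obtain ⟨u, hu⟩ := ctr_mem (LinearMap.proj k) w hw
  have hu0 : u ≠ 0 := by
    rintro rfl
    rw [map_zero] at hu
    exact hk hu
  -- ι u * w = 0
  have hcomm := even_comm w hw u
  have hder := ctr_derivation (LinearMap.proj k) w hw w
  rw [hsq, map_zero, hu, ← hcomm] at hder
  have hvw : ExteriorAlgebra.ι ℝ u * w = 0 := by
    have h2 : (2 : ℝ) • (ExteriorAlgebra.ι ℝ u * w) = 0 := by
      rw [two_smul]; exact hder.symm
    exact (smul_eq_zero.mp h2).resolve_left two_ne_zero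
  -- pick g with g u = 1
  obtain ⟨m, hm⟩ : ∃ m, u m ≠ 0 := by
    by_contra hc
    push_neg at hc
    exact hu0 (funext hc)
  set g : Module.Dual ℝ (Fin n → ℝ) := (u m)⁻¹ • LinearMap.proj m with hg
  have hgu : g u = 1 := by
    simp [hg, inv_mul_cancel₀ hm]
  obtain ⟨u', hu'⟩ := ctr_mem g w hw
  refine ⟨u, u', ?_⟩
  have key : ctr g (ExteriorAlgebra.ι ℝ u * w) = g u • w - ExteriorAlgebra.ι ℝ u * ctr g w := by
    rw [ctr, CliffordAlgebra.contractLeft_ι_mul]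
  rw [hvw, map_zero, hgu, one_smul, hu'] at key
  exact sub_eq_zero.mp key.symm
end

section
/- (Erdős–Ko–Rado uniqueness) Suppose r < n/2. If 𝓕 is an intersecting family of r-element subsets of {1, …, n} with |𝓕| = C(n−1, r−1), then all the sets in 𝓕 share a common element. -/
open Finset
open scoped FinsetFamily

lemma card_filter_superset {α : Type*} [DecidableEq α] (s T : Finset α) (hT : T ⊆ s) (k : ℕ)
    (hk : T.card ≤ k) :
    #({A ∈ s.powersetCard k | T ⊆ A}) = (s.card - T.card).choose (k - T.card) := by
  rw [← card_sdiff_of_subset hT, ← card_powersetCard (k - T.card) (s \ T)]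
  apply card_bij' (fun A _ => A \ T) (fun B _ => B ∪ T)
  · intro A hA
    simp only [mem_filter, mem_powersetCard] at hA ⊢
    exact ⟨sdiff_subset_sdiff hA.1.1 Subset.rfl, by rw [card_sdiff_of_subset hA.2, hA.1.2]⟩
  · intro B hB
    simp only [mem_powersetCard, mem_filter] at hB ⊢
    constructor
    · exact ⟨union_subset (hB.1.trans sdiff_subset) hT, by
        rw [card_union_of_disjoint (disjoint_of_subset_left hB.1 sdiff_disjoint), hB.2]; omega⟩
    · exact subset_union_right
  · intro A hA
    simp only [mem_filter, mem_powersetCard] at hA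
    rw [sdiff_union_of_subset hA.2]
  · intro B hB
    simp only [mem_powersetCard] at hB
    rw [union_sdiff_right]
    exact Finset.sdiff_eq_self_iff_disjoint.2 (disjoint_of_subset_left hB.1 sdiff_disjoint)

lemma kneser_closure {α : Type*} [DecidableEq α] (U : Finset α) (k : ℕ) (hU : 2 * k + 1 ≤ U.card)
    (L : Finset α → Prop)
    (hcl : ∀ E F : Finset α, E ⊆ U → E.card = k → F ⊆ U → F.card = k → Disjoint E F → L E → L F)
    (E₀ : Finset α) (hE₀U : E₀ ⊆ U) (hE₀c : E₀.card = k) (hE₀ : L E₀) :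
    ∀ F ⊆ U, F.card = k → L F := by
  -- swap step
  have swap : ∀ E F : Finset α, E ⊆ U → E.card = k → L E → F ⊆ U → F.card = k →
      (F \ E).card ≤ 1 → L F := by
    intro E F hEU hEc hLE hFU hFc hFE
    have hcup : (E ∪ F).card ≤ k + 1 := by
      rw [union_comm, ← card_sdiff_add_card]
      omega
    obtain ⟨G, hGsub, hGc⟩ := exists_subset_card_eq (show k ≤ (U \ (E ∪ F)).card by
      have h1 : (U \ (E ∪ F)).card ≥ U.card - (E ∪ F).card := le_card_sdiff _ _
      omega)
    have hGU : G ⊆ U := hGsub.trans (sdiff_subset)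
    have hGE : Disjoint E G := by
      have : Disjoint G (E ∪ F) := disjoint_of_subset_left hGsub sdiff_disjoint
      exact (this.mono_right subset_union_left).symm
    have hGF : Disjoint G F := by
      have : Disjoint G (E ∪ F) := disjoint_of_subset_left hGsub sdiff_disjoint
      exact this.mono_right subset_union_right
    exact hcl G F hGU hGc hFU hFc hGF (hcl E G hEU hEc hGU hGc hGE hLE)
  -- main induction on (F \ E).card
  suffices H : ∀ d : ℕ, ∀ E F : Finset α, E ⊆ U → E.card = k → L E → F ⊆ U → F.card = k →
      (F \ E).card = d → L F by
    intro F hFU hFc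
    exact H _ E₀ F hE₀U hE₀c hE₀ hFU hFc rfl
  intro d
  induction d using Nat.strong_induction_on with
  | _ d ih =>
    intro E F hEU hEc hLE hFU hFc hd
    rcases Nat.eq_zero_or_pos d with h0 | hpos
    · exact swap E F hEU hEc hLE hFU hFc (by omega)
    · have hFE : (F \ E).Nonempty := by rw [← card_pos, hd]; omega
      have hEF : (E \ F).Nonempty := by
        rw [← card_pos, card_sdiff_comm (by omega : E.card = F.card), hd]; omega
      obtain ⟨y, hy⟩ := hFE
      obtain ⟨z, hz⟩ := hEF
      simp only [mem_sdiff] at hy hz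
      set E₂ : Finset α := insert y (E.erase z) with hE₂def
      have hyE : y ∉ E.erase z := fun h => hy.2 (mem_of_mem_erase h)
      have hE₂U : E₂ ⊆ U := by
        rw [hE₂def]
        exact insert_subset (hFU hy.1) ((erase_subset _ _).trans hEU)
      have hE₂c : E₂.card = k := by
        rw [hE₂def, card_insert_of_notMem hyE, card_erase_of_mem hz.1, hEc]
        have : 0 < k := hEc ▸ card_pos.2 ⟨z, hz.1⟩
        omega
      have hLE₂ : L E₂ := by
        apply swap E E₂ hEU hEc hLE hE₂U hE₂c
        have : E₂ \ E ⊆ {y} := by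
          intro w hw
          simp only [hE₂def, mem_sdiff, mem_insert, mem_erase] at hw
          rcases hw.1 with h | h
          · simp [h]
          · exact absurd h.2 hw.2
        calc (E₂ \ E).card ≤ ({y} : Finset α).card := card_le_card this
          _ = 1 := card_singleton y
      have hd₂ : (F \ E₂).card = d - 1 := by
        have heq : F \ E₂ = (F \ E).erase y := by
          ext w
          simp only [hE₂def, mem_sdiff, mem_erase, mem_insert]
          constructor
          · rintro ⟨hwF, hw2⟩
            push_neg at hw2
            refine ⟨hw2.1, hwF, fun hwE => ?_⟩
            by_cases hwz : w = z
            · exact hz.2 (hwz ▸ hwF)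
            · exact hw2.2 hwz hwE
          · rintro ⟨hne, hwF, hwnE⟩
            refine ⟨hwF, ?_⟩
            push_neg
            exact ⟨hne, fun _ => hwnE⟩
        rw [heq, card_erase_of_mem (mem_sdiff.2 ⟨hy.1, hy.2⟩), hd]
      exact ih (d-1) (by omega) E₂ F hE₂U hE₂c hLE₂ hFU hFc hd₂


lemma compress_cases (x j : Fin n) (hxj : x ≠ j) (A : Finset (Fin n)) :
    (UV.compress {x} {j} A = A) ∨
      (x ∉ A ∧ j ∈ A ∧ UV.compress {x} {j} A = insert x (A.erase j)) := by
  unfold UV.compress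
  split_ifs with h
  · right
    have hx : x ∉ A := disjoint_singleton_left.1 h.1
    have hj : j ∈ A := singleton_subset_iff.1 h.2
    refine ⟨hx, hj, ?_⟩
    ext w
    simp only [sup_eq_union, mem_sdiff, mem_union, mem_singleton, mem_insert, mem_erase]
    constructor
    · rintro ⟨h1 | h1, h2⟩
      · exact Or.inr ⟨h2, h1⟩
      · exact Or.inl h1
    · rintro (h1 | ⟨h1, h2⟩)
      · exact ⟨Or.inr h1, h1 ▸ hxj⟩
      · exact ⟨Or.inl h2, h1⟩
  · left; rfl

lemma moved_struct {x j : Fin n} (hxj : x ≠ j) {𝓕 : Finset (Finset (Fin n))}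
    {B' : Finset (Fin n)} (h1 : B' ∈ 𝓒 {x} {j} 𝓕) (h2 : B' ∉ 𝓕) :
    ∃ B ∈ 𝓕, x ∉ B ∧ j ∈ B ∧ B' = insert x (B.erase j) := by
  rw [UV.mem_compression] at h1
  rcases h1 with ⟨h1, _⟩ | ⟨_, B, hB, hcB⟩
  · exact absurd h1 h2
  rcases compress_cases x j hxj B with hc | ⟨hx, hj, hc⟩
  · have hbb : B' = B := by rw [← hcB, hc]
    exact absurd (hbb ▸ hB) h2
  · exact ⟨B, hB, hx, hj, by rw [← hcB, hc]⟩

lemma compression_intersecting {x j : Fin n} (hxj : x ≠ j) {𝓕 : Finset (Finset (Fin n))}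
    (hint : ∀ s ∈ 𝓕, ∀ t ∈ 𝓕, (s ∩ t).Nonempty) :
    ∀ s ∈ 𝓒 {x} {j} 𝓕, ∀ t ∈ 𝓒 {x} {j} 𝓕, (s ∩ t).Nonempty := by
  -- asymmetric helper
  have key : ∀ s ∈ 𝓕, UV.compress {x} {j} s ∈ 𝓕 →
      ∀ B ∈ 𝓕, x ∉ B → j ∈ B → (s ∩ insert x (B.erase j)).Nonempty := by
    intro s hs hcs B hB hxB hjB
    obtain ⟨y, hy⟩ := hint s hs B hB
    rw [mem_inter] at hy
    by_cases hyj : y = j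
    · -- s ∩ B might only be {j}
      by_cases hxs : x ∈ s
      · exact ⟨x, mem_inter.2 ⟨hxs, mem_insert_self _ _⟩⟩
      · rcases compress_cases x j hxj s with hc | ⟨_, _, hc⟩
        · -- compress s = s, but x ∉ s and j ∈ s means compress moved it; contradiction?
          -- not necessarily: compress s = s can happen only if ¬(x∉s ∧ j∈s); j ∈ s from hy
          have hjs : j ∈ s := hyj ▸ hy.1
          -- then the if condition was true, so compress should have moved... derive directly:
          have h' : UV.compress {x} {j} s = (s ⊔ {x}) \ {j} :=
            UV.compress_of_disjoint_of_le (disjoint_singleton_left.2 hxs)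
              (singleton_subset_iff.2 hjs)
          rw [hc] at h'
          have hjs' := hjs
          rw [h'] at hjs'
          simp at hjs'
        · obtain ⟨z, hz⟩ := hint _ (hc ▸ hcs) B hB
          rw [mem_inter] at hz
          rcases mem_insert.1 hz.1 with rfl | hzs
          · exact absurd hz.2 hxB
          · obtain ⟨hzj, hzs'⟩ := mem_erase.1 hzs
            exact ⟨z, mem_inter.2 ⟨hzs', mem_insert_of_mem (mem_erase.2 ⟨hzj, hz.2⟩)⟩⟩
    · have hyB : y ∈ B.erase j := mem_erase.2 ⟨hyj, hy.2⟩
      exact ⟨y, mem_inter.2 ⟨hy.1, mem_insert_of_mem hyB⟩⟩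
  intro s hs t ht
  by_cases hsF : s ∈ 𝓕 <;> by_cases htF : t ∈ 𝓕
  · exact hint s hsF t htF
  · obtain ⟨B, hB, hxB, hjB, rfl⟩ := moved_struct hxj ht htF
    have hcs : UV.compress {x} {j} s ∈ 𝓕 := by
      rw [UV.mem_compression] at hs
      rcases hs with ⟨_, h⟩ | ⟨h, _⟩
      · exact h
      · exact absurd hsF h
    exact key s hsF hcs B hB hxB hjB
  · obtain ⟨B, hB, hxB, hjB, rfl⟩ := moved_struct hxj hs hsF
    have hct : UV.compress {x} {j} t ∈ 𝓕 := by
      rw [UV.mem_compression] at ht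
      rcases ht with ⟨_, h⟩ | ⟨h, _⟩
      · exact h
      · exact absurd htF h
    rw [inter_comm]
    exact key t htF hct B hB hxB hjB
  · obtain ⟨B, hB, hxB, hjB, rfl⟩ := moved_struct hxj hs hsF
    obtain ⟨C, hC, hxC, hjC, rfl⟩ := moved_struct hxj ht htF
    exact ⟨x, mem_inter.2 ⟨mem_insert_self _ _, mem_insert_self _ _⟩⟩

def fwt (A : Finset (Fin n)) : ℕ := ∑ y ∈ A, (y : ℕ)

def fmeasure (𝓕 : Finset (Finset (Fin n))) : ℕ := ∑ A ∈ 𝓕, fwt A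

lemma fmeasure_lt {x j : Fin n} (hxj : (x : ℕ) < (j : ℕ)) {𝓕 : Finset (Finset (Fin n))}
    (hne : 𝓒 {x} {j} 𝓕 ≠ 𝓕) : fmeasure (𝓒 {x} {j} 𝓕) < fmeasure 𝓕 := by
  classical
  have hxj' : x ≠ j := fun h => by simp [h] at hxj
  set c := UV.compress ({x} : Finset (Fin n)) {j} with hc
  have hdisj : Disjoint {A ∈ 𝓕 | c A ∈ 𝓕} {A ∈ 𝓕.image c | A ∉ 𝓕} := UV.compress_disjoint
  have hsum : fmeasure (𝓒 {x} {j} 𝓕) =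
      ∑ A ∈ {A ∈ 𝓕 | c A ∈ 𝓕}, fwt A + ∑ A ∈ {A ∈ 𝓕 | c A ∉ 𝓕}, fwt (c A) := by
    rw [fmeasure, UV.compression, sum_union hdisj, filter_image,
      sum_image (fun a ha b hb hab => UV.compress_injOn (mem_coe.2 ha) (mem_coe.2 hb) hab)]
  have hsum2 : fmeasure 𝓕 =
      ∑ A ∈ {A ∈ 𝓕 | c A ∈ 𝓕}, fwt A + ∑ A ∈ {A ∈ 𝓕 | c A ∉ 𝓕}, fwt A := by
    rw [fmeasure, sum_filter_add_sum_filter_not]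
  have hne' : {A ∈ 𝓕 | c A ∉ 𝓕}.Nonempty := by
    rw [nonempty_iff_ne_empty]
    intro hemp
    apply hne
    rw [UV.compression, filter_image, hemp, image_empty, union_empty, filter_eq_self]
    intro A hA
    by_contra hcA
    have : A ∈ ({A ∈ 𝓕 | c A ∉ 𝓕} : Finset _) := mem_filter.2 ⟨hA, hcA⟩
    simp [hemp] at this
  have hlt : ∀ A ∈ {A ∈ 𝓕 | c A ∉ 𝓕}, fwt (c A) < fwt A := by
    intro A hA
    rw [mem_filter] at hA
    rcases compress_cases x j hxj' A with hcc | ⟨hxA, hjA, hcc⟩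
    · exact absurd (hc ▸ hcc ▸ hA.1) (hc ▸ hA.2)
    · rw [hc] at *
      rw [hcc, fwt, fwt, sum_insert (fun hmem => hxA (mem_of_mem_erase hmem))]
      have h1 : ∑ y ∈ A.erase j, (y:ℕ) + (j:ℕ) = ∑ y ∈ A, (y:ℕ) := sum_erase_add _ _ hjA
      omega
  rw [hsum, hsum2]
  exact Nat.add_lt_add_left (sum_lt_sum_of_nonempty hne' hlt) _
section Helpers
variable {n : ℕ}

lemma compress_eq_of {x j : Fin n} (hxj : x ≠ j) {A : Finset (Fin n)}
    (hx : x ∉ A) (hj : j ∈ A) :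
    UV.compress {x} {j} A = insert x (A.erase j) := by
  rcases compress_cases x j hxj A with hc | ⟨_, _, hc⟩
  · exfalso
    have h' : UV.compress {x} {j} A = (A ⊔ {x}) \ {j} :=
      UV.compress_of_disjoint_of_le (disjoint_singleton_left.2 hx) (singleton_subset_iff.2 hj)
    rw [hc] at h'
    have hj' := hj
    rw [h'] at hj'
    simp at hj'
  · exact hc

noncomputable def dmap (A : Finset (Fin n)) : Finset (Fin (n-1)) :=
  A.preimage (Fin.castLE (Nat.sub_le n 1)) ((Fin.castLE_injective _).injOn)

lemma mem_dmap {A : Finset (Fin n)} {y : Fin (n-1)} :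
    y ∈ dmap A ↔ Fin.castLE (Nat.sub_le n 1) y ∈ A := mem_preimage

lemma dmap_image {A : Finset (Fin n)} (hA : ∀ w ∈ A, (w : ℕ) < n - 1) :
    (dmap A).image (Fin.castLE (Nat.sub_le n 1)) = A := by
  ext w
  simp only [mem_image]
  constructor
  · rintro ⟨y, hy, rfl⟩
    exact mem_dmap.1 hy
  · intro hw
    have hcast : Fin.castLE (Nat.sub_le n 1) ⟨(w : ℕ), hA w hw⟩ = w := Fin.ext rfl
    refine ⟨⟨(w : ℕ), hA w hw⟩, mem_dmap.2 (by rw [hcast]; exact hw), hcast⟩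

lemma dmap_card {A : Finset (Fin n)} (hA : ∀ w ∈ A, (w : ℕ) < n - 1) :
    (dmap A).card = A.card := by
  conv_rhs => rw [← dmap_image hA]
  rw [card_image_of_injective _ (Fin.castLE_injective _)]

lemma dmap_inj {A B : Finset (Fin n)} (hA : ∀ w ∈ A, (w : ℕ) < n - 1)
    (hB : ∀ w ∈ B, (w : ℕ) < n - 1) (h : dmap A = dmap B) : A = B := by
  rw [← dmap_image hA, ← dmap_image hB, h]

lemma dmap_inter {A B : Finset (Fin n)} (hA : ∀ w ∈ A, (w : ℕ) < n - 1)
    (h : (A ∩ B).Nonempty) : (dmap A ∩ dmap B).Nonempty := by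
  obtain ⟨w, hw⟩ := h
  rw [mem_inter] at hw
  have hcast : Fin.castLE (Nat.sub_le n 1) ⟨(w : ℕ), hA w hw.1⟩ = w := Fin.ext rfl
  exact ⟨⟨(w : ℕ), hA w hw.1⟩, mem_inter.2 ⟨mem_dmap.2 (by rw [hcast]; exact hw.1),
    mem_dmap.2 (by rw [hcast]; exact hw.2)⟩⟩
end Helpers

/-- **Erdős–Ko–Rado uniqueness.** If `r < n/2` and `𝓕` is an intersecting
family of `r`-element subsets of `{1, …, n}` with `|𝓕| = C(n-1, r-1)`, then
all sets of `𝓕` share a common element. -/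
theorem erdos_ko_rado_uniqueness (n r : ℕ) (hr : 2 * r < n)
    (𝓕 : Finset (Finset (Fin n)))
    (hcard : ∀ s ∈ 𝓕, s.card = r)
    (hint : ∀ s ∈ 𝓕, ∀ t ∈ 𝓕, (s ∩ t).Nonempty)
    (hmax : 𝓕.card = (n - 1).choose (r - 1)) :
    ∃ a : Fin n, ∀ s ∈ 𝓕, a ∈ s := by
  have hn1 : 0 < n := by omega
  rcases Nat.eq_zero_or_pos r with rfl | hr0
  · exfalso
    have h1 : 𝓕.card = 1 := by simpa using hmax
    obtain ⟨s, hs⟩ := card_eq_one.1 h1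
    subst hs
    have hs0 : s.card = 0 := hcard s (mem_singleton_self s)
    obtain ⟨y, hy⟩ := hint s (mem_singleton_self s) s (mem_singleton_self s)
    rw [card_eq_zero] at hs0
    rw [hs0] at hy
    simp at hy
  rcases eq_or_lt_of_le (show 1 ≤ r from hr0) with hr1 | hr2
  · -- r = 1
    have h1 : 𝓕.card = 1 := by rw [hmax, ← hr1]; simp
    obtain ⟨s, hs⟩ := card_eq_one.1 h1
    subst hs
    have hs1 : s.card = 1 := by rw [hcard s (mem_singleton_self s), ← hr1]
    obtain ⟨a, ha⟩ := card_eq_one.1 hs1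
    exact ⟨a, fun t ht => by rw [mem_singleton.1 ht, ha]; exact mem_singleton_self a⟩
  -- now r ≥ 2
  set j : Fin n := ⟨n-1, by omega⟩ with hjdef
  by_cases hcomp : ∀ x : Fin n, x ≠ j → UV.IsCompressed {x} {j} 𝓕
  · -- BLOCK C : compressed case
    have hn2 : (2:ℕ) ≤ n - 1 := by omega
    set 𝓕₁ : Finset (Finset (Fin n)) := {A ∈ 𝓕 | j ∈ A} with h𝓕₁
    set 𝓕₀ : Finset (Finset (Fin n)) := {A ∈ 𝓕 | ¬ j ∈ A} with h𝓕₀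
    have hsmallgen : ∀ A : Finset (Fin n), j ∉ A → ∀ w ∈ A, (w : ℕ) < n - 1 := by
      intro A hjA w hw
      have h1 : w ≠ j := fun h => hjA (h ▸ hw)
      have h2 : (w : ℕ) < n := w.isLt
      have h3 : (w : ℕ) ≠ n - 1 := fun h => h1 (Fin.ext h)
      omega
    have hsmall₀ : ∀ A ∈ 𝓕₀, ∀ w ∈ A, (w : ℕ) < n - 1 := by
      intro A hA
      exact hsmallgen A (mem_filter.1 hA).2
    -- the bottom family
    set 𝓖₀ : Finset (Finset (Fin (n-1))) := 𝓕₀.image dmap with h𝓖₀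
    have h𝓖₀card : 𝓖₀.card = 𝓕₀.card :=
      card_image_of_injOn (fun A hA B hB h => dmap_inj (hsmall₀ A hA) (hsmall₀ B hB) h)
    have hEKR₀ : 𝓕₀.card ≤ (n-2).choose (r-1) := by
      have hb := Finset.erdos_ko_rado (n := n-1) (𝒜 := 𝓖₀) (r := r)
        (fun G hG H hH => by
          rw [mem_coe, h𝓖₀, mem_image] at hG hH
          obtain ⟨A, hA, rfl⟩ := hG
          obtain ⟨B, hB, rfl⟩ := hH
          rw [not_disjoint_iff_nonempty_inter]
          exact dmap_inter (hsmall₀ A hA)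
            (hint A (mem_filter.1 hA).1 B (mem_filter.1 hB).1))
        (fun G hG => by
          rw [mem_coe, h𝓖₀, mem_image] at hG
          obtain ⟨A, hA, rfl⟩ := hG
          rw [dmap_card (hsmall₀ A hA)]
          exact hcard A (mem_filter.1 hA).1)
        (by omega)
      rw [h𝓖₀card] at hb
      have : n - 1 - 1 = n - 2 := by omega
      rwa [this] at hb
    -- the link family
    have hsmall₁ : ∀ A ∈ 𝓕₁, ∀ w ∈ A.erase j, (w : ℕ) < n - 1 := by
      intro A hA
      exact hsmallgen (A.erase j) (notMem_erase j A)
    have hlink : ∀ A ∈ 𝓕₁, ∀ B ∈ 𝓕₁, ((A.erase j) ∩ (B.erase j)).Nonempty := by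
      intro A hA B hB
      rw [h𝓕₁, mem_filter] at hA hB
      by_contra hemp
      rw [not_nonempty_iff_eq_empty] at hemp
      have hcup : (A ∪ B).card < n := by
        have h1 := card_union_le A B
        rw [hcard A hA.1, hcard B hB.1] at h1
        omega
      obtain ⟨z, hz⟩ : ∃ z, z ∉ A ∪ B := by
        by_contra h
        push_neg at h
        have h2 : (univ : Finset (Fin n)) ⊆ A ∪ B := fun w _ => h w
        have h3 := card_le_card h2
        rw [card_univ, Fintype.card_fin] at h3
        omega
      have hzj : z ≠ j := fun h => hz (mem_union_left _ (h ▸ hA.2))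
      have hzA : z ∉ A := fun h => hz (mem_union_left _ h)
      have hzB : z ∉ B := fun h => hz (mem_union_right _ h)
      have hA' : insert z (A.erase j) ∈ 𝓕 := by
        have hm := UV.compress_mem_compression (u := ({z} : Finset (Fin n))) (v := {j}) hA.1
        rw [compress_eq_of hzj hzA hA.2] at hm
        rwa [hcomp z hzj] at hm
      obtain ⟨y, hy⟩ := hint _ hA' B hB.1
      rw [mem_inter] at hy
      rcases mem_insert.1 hy.1 with rfl | hyA
      · exact hzB hy.2
      · have hymem : y ∈ (A.erase j) ∩ (B.erase j) :=
          mem_inter.2 ⟨hyA, mem_erase.2 ⟨(mem_erase.1 hyA).1, hy.2⟩⟩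
        rw [hemp] at hymem
        simp at hymem
    set 𝓖₁ : Finset (Finset (Fin (n-1))) := 𝓕₁.image (fun A => dmap (A.erase j)) with h𝓖₁
    have h𝓖₁card : 𝓖₁.card = 𝓕₁.card := by
      apply card_image_of_injOn
      intro A hA B hB h
      have h2 := dmap_inj (hsmall₁ A hA) (hsmall₁ B hB) h
      have hjA : j ∈ A := (mem_filter.1 hA).2
      have hjB : j ∈ B := (mem_filter.1 hB).2
      rw [← insert_erase hjA, ← insert_erase hjB, h2]
    have hEKR₁ : 𝓕₁.card ≤ (n-2).choose (r-2) := by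
      have hb := Finset.erdos_ko_rado (n := n-1) (𝒜 := 𝓖₁) (r := r-1)
        (fun G hG H hH => by
          rw [mem_coe, h𝓖₁, mem_image] at hG hH
          obtain ⟨A, hA, rfl⟩ := hG
          obtain ⟨B, hB, rfl⟩ := hH
          rw [not_disjoint_iff_nonempty_inter]
          exact dmap_inter (hsmall₁ A hA) (hlink A hA B hB))
        (fun G hG => by
          rw [mem_coe, h𝓖₁, mem_image] at hG
          obtain ⟨A, hA, rfl⟩ := hG
          rw [dmap_card (hsmall₁ A hA), card_erase_of_mem (mem_filter.1 hA).2,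
            hcard A (mem_filter.1 hA).1])
        (by omega)
      rw [h𝓖₁card] at hb
      have he1 : n - 1 - 1 = n - 2 := by omega
      have he2 : r - 1 - 1 = r - 2 := by omega
      rwa [he1, he2] at hb
    have hpascal : (n-1).choose (r-1) = (n-2).choose (r-2) + (n-2).choose (r-1) := by
      have h1 : n - 1 = (n-2) + 1 := by omega
      have h2 : r - 1 = (r-2) + 1 := by omega
      have h3 : (r-2).succ = r - 1 := by omega
      rw [h1, h2, Nat.choose_succ_succ, h3, ← h2]
    have hsplit : 𝓕₁.card + 𝓕₀.card = 𝓕.card := card_filter_add_card_filter_not _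
    have h𝓕₁exact : 𝓕₁.card = (n-2).choose (r-2) := by omega
    -- recursive call on the link
    obtain ⟨a', ha'⟩ := erdos_ko_rado_uniqueness (n-1) (r-1) (by omega) 𝓖₁
      (fun G hG => by
        rw [h𝓖₁, mem_image] at hG
        obtain ⟨A, hA, rfl⟩ := hG
        rw [dmap_card (hsmall₁ A hA), card_erase_of_mem (mem_filter.1 hA).2,
          hcard A (mem_filter.1 hA).1])
      (fun G hG H hH => by
        rw [h𝓖₁, mem_image] at hG hH
        obtain ⟨A, hA, rfl⟩ := hG
        obtain ⟨B, hB, rfl⟩ := hH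
        exact dmap_inter (hsmall₁ A hA) (hlink A hA B hB))
      (by rw [h𝓖₁card, h𝓕₁exact, Nat.sub_sub, Nat.sub_sub])
    set a : Fin n := Fin.castLE (Nat.sub_le n 1) a' with hadef
    have haj : a ≠ j := by
      intro h
      have h1 : (a : ℕ) = n - 1 := by rw [h]
      have h2 : (a' : ℕ) < n - 1 := a'.isLt
      have h3 : (a : ℕ) = (a' : ℕ) := rfl
      omega
    have ha₁ : ∀ A ∈ 𝓕₁, a ∈ A := by
      intro A hA
      have hmem : dmap (A.erase j) ∈ 𝓖₁ := by
        rw [h𝓖₁]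
        exact mem_image_of_mem _ hA
      have h2 := ha' _ hmem
      rw [mem_dmap] at h2
      exact mem_of_mem_erase h2
    have hTcard : ({a, j} : Finset (Fin n)).card = 2 := card_pair haj
    have hS₂card : #({A ∈ (univ : Finset (Fin n)).powersetCard r | {a, j} ⊆ A})
        = (n-2).choose (r-2) := by
      rw [card_filter_superset univ {a,j} (subset_univ _) r (by rw [hTcard]; omega), hTcard,
        card_univ, Fintype.card_fin]
    have h𝓕₁S : 𝓕₁ = {A ∈ (univ : Finset (Fin n)).powersetCard r | {a, j} ⊆ A} := by
      apply eq_of_subset_of_card_le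
      · intro A hA
        rw [mem_filter, mem_powersetCard]
        refine ⟨⟨subset_univ A, hcard A (mem_filter.1 hA).1⟩, ?_⟩
        rw [insert_subset_iff, singleton_subset_iff]
        exact ⟨ha₁ A hA, (mem_filter.1 hA).2⟩
      · rw [hS₂card, h𝓕₁exact]
    refine ⟨a, fun A hA => ?_⟩
    by_cases hjA : j ∈ A
    · exact ha₁ A (mem_filter.2 ⟨hA, hjA⟩)
    · by_contra haA
      obtain ⟨E, hEsub, hEc⟩ := exists_subset_card_eq
        (show r - 2 ≤ ((univ : Finset (Fin n)) \ (A ∪ {a, j})).card from by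
          have h5 := le_card_sdiff (A ∪ {a,j}) univ
          have h6 : (A ∪ {a,j}).card ≤ r + 2 := by
            refine le_trans (card_union_le _ _) ?_
            rw [hcard A hA, hTcard]
          rw [card_univ, Fintype.card_fin] at h5
          omega)
      have hEA : ∀ w ∈ E, w ∉ A ∧ w ≠ a ∧ w ≠ j := by
        intro w hw
        have h7 := mem_sdiff.1 (hEsub hw)
        have h8 := h7.2
        rw [mem_union, mem_insert, mem_singleton] at h8
        push_neg at h8
        exact ⟨h8.1, h8.2.1, h8.2.2⟩
      have hBmem : insert a (insert j E) ∈ 𝓕₁ := by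
        rw [h𝓕₁S, mem_filter, mem_powersetCard]
        refine ⟨⟨subset_univ _, ?_⟩, ?_⟩
        · have hjE : j ∉ E := fun h => (hEA _ h).2.2 rfl
          have haE : a ∉ insert j E := by
            intro h
            rcases mem_insert.1 h with h | h
            · exact haj h
            · exact (hEA _ h).2.1 rfl
          rw [card_insert_of_notMem haE, card_insert_of_notMem hjE, hEc]
          omega
        · rw [insert_subset_iff, singleton_subset_iff]
          exact ⟨mem_insert_self _ _, mem_insert_of_mem (mem_insert_self _ _)⟩
      have hB𝓕 : insert a (insert j E) ∈ 𝓕 := (mem_filter.1 hBmem).1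
      obtain ⟨y, hy⟩ := hint A hA _ hB𝓕
      rw [mem_inter] at hy
      rcases mem_insert.1 hy.2 with rfl | h
      · exact haA hy.1
      rcases mem_insert.1 h with rfl | h
      · exact hjA hy.1
      · exact (hEA _ h).1 hy.1
  · -- compression step
    push_neg at hcomp
    obtain ⟨x, hxj, hnc⟩ := hcomp
    have hxval : (x : ℕ) < n - 1 := by
      have hxn : (x : ℕ) < n := x.isLt
      rcases lt_or_ge ((x : ℕ)) (n-1) with h | h
      · exact h
      · exact absurd (Fin.ext (by simp [hjdef]; omega) : x = j) hxj
    have hdec : fmeasure (𝓒 {x} {j} 𝓕) < fmeasure 𝓕 :=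
      fmeasure_lt (by simp [hjdef]; omega) hnc
    have hcard' : ∀ s ∈ 𝓒 {x} {j} 𝓕, s.card = r := by
      intro s hs
      exact Set.Sized.uvCompression (by simp) (fun A hA => hcard A hA) (mem_coe.2 hs)
    have hint' := compression_intersecting hxj hint
    have hmax' : (𝓒 {x} {j} 𝓕).card = (n-1).choose (r-1) := by
      rw [UV.card_compression, hmax]
    obtain ⟨a, ha⟩ := erdos_ko_rado_uniqueness n r hr (𝓒 {x} {j} 𝓕) hcard' hint' hmax'
    by_cases hax : a = x
    · -- BLOCK H : hard pullback case
      subst hax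
      have hstar_full : ∀ D : Finset (Fin n), D.card = r → a ∈ D → D ∈ 𝓒 {a} {j} 𝓕 := by
        have hsub : 𝓒 {a} {j} 𝓕 ⊆ {A ∈ (univ : Finset (Fin n)).powersetCard r | {a} ⊆ A} := by
          intro A hA
          rw [mem_filter, mem_powersetCard]
          exact ⟨⟨subset_univ A, hcard' A hA⟩, singleton_subset_iff.2 (ha A hA)⟩
        have hScard : #({A ∈ (univ : Finset (Fin n)).powersetCard r | {a} ⊆ A})
            = (n-1).choose (r-1) := by
          have hsing : #({a} : Finset (Fin n)) = 1 := card_singleton a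
          rw [card_filter_superset univ {a} (subset_univ _) r (by rw [hsing]; omega), hsing,
            card_univ, Fintype.card_fin]
        have heq := eq_of_subset_of_card_le hsub (by rw [hScard, hmax'])
        intro D hDr haD
        rw [heq, mem_filter, mem_powersetCard]
        exact ⟨⟨subset_univ D, hDr⟩, singleton_subset_iff.2 haD⟩
      by_cases hM : ∃ B₀ ∈ 𝓕, a ∉ B₀
      · obtain ⟨B₀, hB₀, hxB₀⟩ := hM
        have hjB₀ : j ∈ B₀ := by
          by_contra hjB₀
          have hcB : UV.compress {a} {j} B₀ = B₀ := by
            unfold UV.compress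
            rw [if_neg]
            rintro ⟨_, h2⟩
            exact hjB₀ (singleton_subset_iff.1 h2)
          have hmem : B₀ ∈ 𝓒 {a} {j} 𝓕 :=
            UV.mem_compression.2 (Or.inl ⟨hB₀, by rwa [hcB]⟩)
          exact hxB₀ (ha B₀ hmem)
        set U : Finset (Fin n) := (univ.erase j).erase a with hUdef
        have h1 : ((univ : Finset (Fin n)).erase j).card = n - 1 := by
          rw [card_erase_of_mem (mem_univ j), card_univ, Fintype.card_fin]
        have hUcard : U.card = n - 2 := by
          rw [hUdef, card_erase_of_mem (mem_erase.2 ⟨hxj, mem_univ a⟩), h1]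
          omega
        have hUx : a ∉ U := fun h => (mem_erase.1 h).1 rfl
        have hUj : j ∉ U := fun h => (mem_erase.1 (mem_of_mem_erase h)).1 rfl
        have hall : ∀ F ⊆ U, F.card = r - 1 → insert j F ∈ 𝓕 := by
          have hcl : ∀ E F : Finset (Fin n), E ⊆ U → E.card = r-1 → F ⊆ U → F.card = r-1 →
              Disjoint E F → insert j E ∈ 𝓕 → insert j F ∈ 𝓕 := by
            intro E F hEU hEc hFU hFc hEF hLE
            have hxF : a ∉ F := fun h => hUx (hFU h)
            have hjF : j ∉ F := fun h => hUj (hFU h)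
            have hxE : a ∉ E := fun h => hUx (hEU h)
            have hjE : j ∉ E := fun h => hUj (hEU h)
            have hDcard : (insert a F).card = r := by
              rw [card_insert_of_notMem hxF, hFc]; omega
            have hD : insert a F ∈ 𝓒 {a} {j} 𝓕 := hstar_full _ hDcard (mem_insert_self a F)
            have hDF : insert a F ∉ 𝓕 := by
              intro hDF
              obtain ⟨y, hy⟩ := hint _ hDF _ hLE
              rw [mem_inter] at hy
              rcases mem_insert.1 hy.1 with rfl | hyF
              · rcases mem_insert.1 hy.2 with h | h
                · exact hxj h
                · exact hxE h
              · rcases mem_insert.1 hy.2 with rfl | hyE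
                · exact hjF hyF
                · exact (disjoint_right.1 hEF hyF) hyE
            obtain ⟨C, hC, hxC, hjC, hCeq⟩ := moved_struct hxj hD hDF
            have hCF : C = insert j F := by
              have h3 : (insert a F).erase a = (insert a (C.erase j)).erase a := by rw [hCeq]
              rw [erase_insert hxF, erase_insert (fun h => hxC (mem_of_mem_erase h))] at h3
              rw [h3]
              exact (insert_erase hjC).symm
            rw [← hCF]; exact hC
          exact kneser_closure U (r-1) (by omega) (fun E => insert j E ∈ 𝓕) hcl
            (B₀.erase j)
            (fun w hw => by
              rw [hUdef]
              exact mem_erase.2 ⟨fun h => hxB₀ (h ▸ mem_of_mem_erase hw),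
                mem_erase.2 ⟨(mem_erase.1 hw).1, mem_univ w⟩⟩)
            (by rw [card_erase_of_mem hjB₀, hcard B₀ hB₀])
            (by show insert j (B₀.erase j) ∈ 𝓕; rw [insert_erase hjB₀]; exact hB₀)
        refine ⟨j, fun A hA => ?_⟩
        by_contra hjA
        have hxA : a ∈ A := by
          by_contra hxA
          have hcA : UV.compress {a} {j} A = A := by
            unfold UV.compress
            rw [if_neg]
            rintro ⟨_, h2⟩
            exact hjA (singleton_subset_iff.1 h2)
          have hmem : A ∈ 𝓒 {a} {j} 𝓕 := UV.mem_compression.2 (Or.inl ⟨hA, by rwa [hcA]⟩)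
          exact hxA (ha A hmem)
        obtain ⟨F, hFU, hFc⟩ := exists_subset_card_eq
          (show r - 1 ≤ (U \ A).card from by
            have h5 := le_card_sdiff A U
            have h6 := hcard A hA
            omega)
        have hB : insert j F ∈ 𝓕 := hall F (hFU.trans sdiff_subset) hFc
        obtain ⟨y, hy⟩ := hint A hA _ hB
        rw [mem_inter] at hy
        rcases mem_insert.1 hy.2 with rfl | hyF
        · exact hjA hy.1
        · exact (mem_sdiff.1 (hFU hyF)).2 hy.1
      · push_neg at hM
        exact ⟨a, hM⟩
    · -- easy pullback
      refine ⟨a, fun A hA => ?_⟩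
      have hcA := UV.compress_mem_compression (u := ({x} : Finset (Fin n))) (v := {j}) hA
      have haA := ha _ hcA
      rcases compress_cases x j hxj A with hc | ⟨hxA, hjA, hc⟩
      · rwa [hc] at haA
      · rw [hc] at haA
        rcases mem_insert.1 haA with rfl | h
        · exact absurd rfl hax
        · exact mem_of_mem_erase h
termination_by (n, fmeasure 𝓕)
decreasing_by
  all_goals first
    | exact Prod.Lex.right _ hdec
    | exact Prod.Lex.left _ _ (by omega)
end

section
/- (Hilton–Milner theorem) Suppose r < n/2. If 𝓕 is an intersecting family of r-element subsets of {1, …, n} such that there is no element common to all sets of 𝓕, then |𝓕| ≤ C(n−1, r−1) − C(n−r−1, r−1) + 1, where C denotes the binomial coefficient. -/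
open Finset
namespace HM


abbrev Fam := Finset (Finset ℕ)

/-- cross-intersecting -/
def Cross (𝓐 𝓑 : Fam) : Prop := ∀ s ∈ 𝓐, ∀ t ∈ 𝓑, (s ∩ t).Nonempty

def Inter (𝓖 : Fam) : Prop := Cross 𝓖 𝓖

/-- closed under pushing elements down -/
def Shifted (𝓖 : Fam) : Prop :=
  ∀ F ∈ 𝓖, ∀ j ∈ F, ∀ i < j, i ∉ F → insert i (F.erase j) ∈ 𝓖

def sh (i j : ℕ) (F : Finset ℕ) : Finset ℕ := insert i (F.erase j)

def phi (i j : ℕ) (𝓖 : Fam) (F : Finset ℕ) : Finset ℕ :=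
  if j ∈ F ∧ i ∉ F ∧ sh i j F ∉ 𝓖 then sh i j F else F

def compress (i j : ℕ) (𝓖 : Fam) : Fam := 𝓖.image (phi i j 𝓖)

def wt (F : Finset ℕ) : ℕ := F.sum id
def fwt (𝓖 : Fam) : ℕ := 𝓖.sum wt

variable {i j : ℕ} {𝓖 𝓐 𝓑 : Fam} {F A B : Finset ℕ}

lemma sh_card (hij : i ≠ j) (hj : j ∈ F) (hi : i ∉ F) : (sh i j F).card = F.card := by
  unfold sh
  rw [card_insert_of_notMem (fun h => hi (mem_of_mem_erase h)), card_erase_of_mem hj]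
  have : F.card ≠ 0 := by
    intro h; rw [card_eq_zero] at h; simp [h] at hj
  omega

lemma sh_recover (hj : j ∈ F) (hi : i ∉ F) : insert j ((sh i j F).erase i) = F := by
  unfold sh
  rw [erase_insert (fun h => hi (mem_of_mem_erase h)), insert_erase hj]

lemma phi_injOn (hij : i ≠ j) : Set.InjOn (phi i j 𝓖) ↑𝓖 := by
  intro A hA B hB h
  unfold phi at h
  split_ifs at h with hA' hB' hB'
  · rw [← sh_recover hA'.1 hA'.2.1, ← sh_recover hB'.1 hB'.2.1, h]
  · exact absurd (h ▸ hB) hA'.2.2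
  · exact absurd (h ▸ hA) hB'.2.2
  · exact h

lemma card_compress (hij : i ≠ j) : (compress i j 𝓖).card = 𝓖.card :=
  card_image_of_injOn (phi_injOn hij)

lemma mem_compress_elim (hF' : F ∈ compress i j 𝓖) :
    ∃ F₀ ∈ 𝓖, phi i j 𝓖 F₀ = F := by
  simpa [compress, mem_image] using hF'

lemma phi_card (hij : i ≠ j) (hF : F ∈ 𝓖) : (phi i j 𝓖 F).card = F.card := by
  unfold phi
  split_ifs with h
  · exact sh_card hij h.1 h.2.1
  · rfl

lemma phi_subset_range {n : ℕ} (hij : i < j) (hF : F ⊆ range n) :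
    phi i j 𝓖 F ⊆ range n := by
  unfold phi
  split_ifs with h
  · intro x hx
    rcases mem_insert.1 hx with rfl | hx
    · have : j < n := mem_range.1 (hF h.1)
      exact mem_range.2 (by omega)
    · exact hF (mem_of_mem_erase hx)
  · exact hF

lemma cross_compress (hij : i < j) (h : Cross 𝓐 𝓑) :
    Cross (compress i j 𝓐) (compress i j 𝓑) := by
  intro A' hA' B' hB'
  obtain ⟨A, hA, rfl⟩ := mem_compress_elim hA'
  obtain ⟨B, hB, rfl⟩ := mem_compress_elim hB'
  unfold phi
  split_ifs with cA cB cB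
  -- A moved, B moved
  · exact ⟨i, mem_inter.2 ⟨mem_insert_self _ _, mem_insert_self _ _⟩⟩
  -- A moved, B kept
  · obtain ⟨z, hz⟩ := h A hA B hB
    rw [mem_inter] at hz
    by_cases hzj : z = j
    · have hjB : j ∈ B := hzj ▸ hz.2
      by_cases hiB : i ∈ B
      · exact ⟨i, mem_inter.2 ⟨mem_insert_self _ _, hiB⟩⟩
      · have hshB : sh i j B ∈ 𝓑 := by
          by_contra hc
          exact cB ⟨hjB, hiB, hc⟩
        obtain ⟨z', hz'⟩ := h A hA _ hshB
        rw [mem_inter] at hz'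
        rcases mem_insert.1 hz'.2 with hz'i | hz'B
        · exact absurd (hz'i ▸ hz'.1) cA.2.1
        · refine ⟨z', mem_inter.2 ⟨?_, mem_of_mem_erase hz'B⟩⟩
          exact mem_insert_of_mem (mem_erase.2 ⟨(mem_erase.1 hz'B).1, hz'.1⟩)
    · exact ⟨z, mem_inter.2 ⟨mem_insert_of_mem (mem_erase.2 ⟨hzj, hz.1⟩), hz.2⟩⟩
  -- A kept, B moved
  · obtain ⟨z, hz⟩ := h A hA B hB
    rw [mem_inter] at hz
    by_cases hzj : z = j
    · have hjA : j ∈ A := hzj ▸ hz.1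
      by_cases hiA : i ∈ A
      · exact ⟨i, mem_inter.2 ⟨hiA, mem_insert_self _ _⟩⟩
      · have hshA : sh i j A ∈ 𝓐 := by
          by_contra hc
          exact cA ⟨hjA, hiA, hc⟩
        obtain ⟨z', hz'⟩ := h _ hshA B hB
        rw [mem_inter] at hz'
        rcases mem_insert.1 hz'.1 with hz'i | hz'A
        · exact absurd (hz'i ▸ hz'.2) cB.2.1
        · refine ⟨z', mem_inter.2 ⟨mem_of_mem_erase hz'A, ?_⟩⟩
          exact mem_insert_of_mem (mem_erase.2 ⟨(mem_erase.1 hz'A).1, hz'.2⟩)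
    · exact ⟨z, mem_inter.2 ⟨hz.1, mem_insert_of_mem (mem_erase.2 ⟨hzj, hz.2⟩)⟩⟩
  -- both kept
  · exact h A hA B hB

lemma wt_sh_lt (hij : i < j) (hj : j ∈ F) (hi : i ∉ F) : wt (sh i j F) < wt F := by
  have h1 := sum_erase_add F id hj
  unfold sh wt
  rw [sum_insert (fun h => hi (mem_of_mem_erase h))]
  simp only [id] at h1 ⊢
  omega

lemma fwt_compress_le (hij : i < j) : fwt (compress i j 𝓖) ≤ fwt 𝓖 := by
  unfold fwt compress
  rw [sum_image (fun a ha b hb h => phi_injOn hij.ne ha hb h)]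
  apply sum_le_sum
  intro F hF
  unfold phi
  split_ifs with h
  · exact (wt_sh_lt hij h.1 h.2.1).le
  · exact le_rfl

lemma fwt_compress_lt (hij : i < j) (hF₀ : F ∈ 𝓖)
    (hmv : j ∈ F ∧ i ∉ F ∧ sh i j F ∉ 𝓖) : fwt (compress i j 𝓖) < fwt 𝓖 := by
  unfold fwt compress
  rw [sum_image (fun a ha b hb h => phi_injOn hij.ne ha hb h)]
  apply sum_lt_sum
  · intro G hG
    unfold phi
    split_ifs with h
    · exact (wt_sh_lt hij h.1 h.2.1).le
    · exact le_rfl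
  · refine ⟨F, hF₀, ?_⟩
    unfold phi
    rw [if_pos hmv]
    exact wt_sh_lt hij hmv.1 hmv.2.1

lemma cover_of_compress_trivial (hij : i < j)
    (hnt : ¬∃ a, ∀ F ∈ 𝓖, a ∈ F)
    (ht : ∃ a, ∀ F' ∈ compress i j 𝓖, a ∈ F') :
    ∀ F ∈ 𝓖, i ∈ F ∨ j ∈ F := by
  obtain ⟨a, ha⟩ := ht
  push_neg at hnt
  obtain ⟨F₁, hF₁, haF₁⟩ := hnt a
  have hphi : a ∈ phi i j 𝓖 F₁ := ha _ (mem_image_of_mem _ hF₁)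
  have hai : a = i := by
    unfold phi at hphi
    split_ifs at hphi with h
    · rcases mem_insert.1 hphi with rfl | h'
      · rfl
      · exact absurd (mem_of_mem_erase h') haF₁
    · exact absurd hphi haF₁
  intro F hF
  have hphiF : a ∈ phi i j 𝓖 F := ha _ (mem_image_of_mem _ hF)
  rw [hai] at hphiF
  unfold phi at hphiF
  split_ifs at hphiF with h
  · exact Or.inr h.1
  · exact Or.inl hphiF







variable {𝓖 𝓐 𝓑 : Fam} {F A B U B₀ : Finset ℕ} {k a e n m : ℕ}

/-- counting: a k-uniform family on ground U has at most |U| choose k sets -/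
lemma card_le_choose (hsub : ∀ F ∈ 𝓖, F ⊆ U) (hsz : ∀ F ∈ 𝓖, F.card = k) :
    𝓖.card ≤ U.card.choose k := by
  have h : 𝓖 ⊆ U.powersetCard k := by
    intro F hF
    exact mem_powersetCard.2 ⟨hsub F hF, hsz F hF⟩
  calc 𝓖.card ≤ (U.powersetCard k).card := card_le_card h
    _ = U.card.choose k := card_powersetCard _ _

/-- counting with a forced meeting of a fixed set B₀ ⊆ U -/
lemma card_add_le_choose (hB : B₀ ⊆ U) (hsub : ∀ F ∈ 𝓖, F ⊆ U) (hsz : ∀ F ∈ 𝓖, F.card = k)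
    (hmeet : ∀ F ∈ 𝓖, (F ∩ B₀).Nonempty) :
    𝓖.card + (U.card - B₀.card).choose k ≤ U.card.choose k := by
  have hdisj : Disjoint 𝓖 ((U \ B₀).powersetCard k) := by
    rw [disjoint_left]
    intro F hF hF'
    obtain ⟨z, hz⟩ := hmeet F hF
    rw [mem_inter] at hz
    have := (mem_powersetCard.1 hF').1 hz.1
    exact (mem_sdiff.1 this).2 hz.2
  have hsub2 : 𝓖 ∪ (U \ B₀).powersetCard k ⊆ U.powersetCard k := by
    intro F hF
    rcases mem_union.1 hF with h | h
    · exact mem_powersetCard.2 ⟨hsub F h, hsz F h⟩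
    · obtain ⟨h1, h2⟩ := mem_powersetCard.1 h
      exact mem_powersetCard.2 ⟨h1.trans sdiff_subset, h2⟩
  have := card_le_card hsub2
  rw [card_union_of_disjoint hdisj, card_powersetCard, card_powersetCard, card_sdiff_of_subset hB] at this
  exact this

/-- the m = 2k base: an intersecting k-uniform family on 2k points -/
lemma lemB (hk : 1 ≤ k) (hsub : ∀ H ∈ 𝓖, H ⊆ range (2*k)) (hsz : ∀ H ∈ 𝓖, H.card = k)
    (hint : Inter 𝓖) : 𝓖.card ≤ (2*k-1).choose (k-1) := by
  classical
  set 𝓖c := 𝓖.image (fun H => range (2*k) \ H) with h𝓖c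
  have hcard : 𝓖c.card = 𝓖.card := by
    apply card_image_of_injOn
    intro A hA B hB h
    have hA' : range (2*k) \ (range (2*k) \ A) = A := Finset.sdiff_sdiff_eq_self (hsub A hA)
    have hB' : range (2*k) \ (range (2*k) \ B) = B := Finset.sdiff_sdiff_eq_self (hsub B hB)
    have h' : range (2*k) \ A = range (2*k) \ B := h
    rw [← hA', ← hB', h']
  have hdisj : Disjoint 𝓖 𝓖c := by
    rw [disjoint_left]
    intro F hF hF'
    obtain ⟨H, hH, hHe⟩ := mem_image.1 hF'
    obtain ⟨z, hz⟩ := hint F hF H hH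
    rw [mem_inter] at hz
    rw [← hHe] at hz
    exact (mem_sdiff.1 hz.1).2 hz.2
  have hsub2 : 𝓖 ∪ 𝓖c ⊆ (range (2*k)).powersetCard k := by
    intro F hF
    rcases mem_union.1 hF with h | h
    · exact mem_powersetCard.2 ⟨hsub F h, hsz F h⟩
    · obtain ⟨H, hH, hHe⟩ := mem_image.1 h
      refine mem_powersetCard.2 ⟨hHe ▸ sdiff_subset, ?_⟩
      rw [← hHe, card_sdiff_of_subset (hsub H hH), card_range, hsz H hH]
      omega
  have hle := card_le_card hsub2
  rw [card_union_of_disjoint hdisj, hcard, card_powersetCard, card_range] at hle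
  obtain ⟨k', rfl⟩ : ∃ k', k = k'+1 := ⟨k-1, by omega⟩
  have hp := Nat.choose_succ_succ (2*k'+1) k'
  have hsym := Nat.choose_symm (show k'+1 ≤ 2*k'+1 by omega)
  have hd : (2*k'+1) - (k'+1) = k' := by omega
  rw [hd] at hsym
  have e1 : 2*(k'+1)-1 = 2*k'+1 := by omega
  have e2 : (k'+1)-1 = k' := by omega
  rw [e1, e2]
  have e3 : 2*(k'+1) = (2*k'+1)+1 := by omega
  rw [e3] at hle
  simp only [Nat.succ_eq_add_one] at hp
  omega

/-- links of a family at element e -/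
def links (e : ℕ) (𝓖 : Fam) : Fam := (𝓖.filter (fun F => e ∈ F)).image (fun F => F.erase e)
/-- sets avoiding e -/
def bar (e : ℕ) (𝓖 : Fam) : Fam := 𝓖.filter (fun F => e ∉ F)

lemma card_split (e : ℕ) (𝓖 : Fam) : 𝓖.card = (bar e 𝓖).card + (links e 𝓖).card := by
  have h1 : (links e 𝓖).card = (𝓖.filter (fun F => e ∈ F)).card := by
    apply card_image_of_injOn
    intro A hA B hB h
    rw [mem_coe, mem_filter] at hA hB
    have h' : A.erase e = B.erase e := h
    rw [← insert_erase hA.2, ← insert_erase hB.2, h']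
  rw [h1, bar]
  rw [Nat.add_comm]
  exact (card_filter_add_card_filter_not (fun F => e ∈ F)).symm

lemma mem_links (hA : A ∈ links e 𝓖) : insert e A ∈ 𝓖 ∧ e ∉ A := by
  obtain ⟨F, hF, rfl⟩ := mem_image.1 hA
  rw [mem_filter] at hF
  exact ⟨by rw [insert_erase hF.2]; exact hF.1, notMem_erase _ _⟩

lemma links_mem (hF : F ∈ 𝓖) (he : e ∈ F) : F.erase e ∈ links e 𝓖 :=
  mem_image_of_mem _ (mem_filter.2 ⟨hF, he⟩)

lemma links_subs (hsub : ∀ F ∈ 𝓖, F ⊆ range (e+1)) :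
    ∀ A ∈ links e 𝓖, A ⊆ range e := by
  intro A hA x hx
  obtain ⟨F, hF, rfl⟩ := mem_image.1 hA
  rw [mem_filter] at hF
  have h1 := mem_range.1 (hsub F hF.1 (mem_of_mem_erase hx))
  have h2 := (mem_erase.1 hx).1
  exact mem_range.2 (by omega)

lemma links_sized (hsz : ∀ F ∈ 𝓖, F.card = a) :
    ∀ A ∈ links e 𝓖, A.card = a - 1 := by
  intro A hA
  obtain ⟨F, hF, rfl⟩ := mem_image.1 hA
  rw [mem_filter] at hF
  rw [card_erase_of_mem hF.2, hsz F hF.1]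

lemma bar_subs (hsub : ∀ F ∈ 𝓖, F ⊆ range (e+1)) :
    ∀ F ∈ bar e 𝓖, F ⊆ range e := by
  intro F hF x hx
  rw [bar, mem_filter] at hF
  have h1 := mem_range.1 (hsub F hF.1 hx)
  have h2 : x ≠ e := fun h => hF.2 (h ▸ hx)
  exact mem_range.2 (by omega)

lemma bar_shifted (hsub : ∀ F ∈ 𝓖, F ⊆ range (e+1)) (hsh : Shifted 𝓖) :
    Shifted (bar e 𝓖) := by
  intro F hF j hj i hij hi
  rw [bar, mem_filter] at hF
  have hb1 : j < e + 1 := mem_range.1 (hsub F hF.1 hj)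
  have hb2 : j ≠ e := fun h => hF.2 (h ▸ hj)
  refine mem_filter.2 ⟨hsh F hF.1 j hj i hij hi, ?_⟩
  intro hmem
  rcases mem_insert.1 hmem with h | h
  · omega
  · exact hF.2 (mem_of_mem_erase h)

lemma links_shifted (hsub : ∀ F ∈ 𝓖, F ⊆ range (e+1)) (hsh : Shifted 𝓖) :
    Shifted (links e 𝓖) := by
  intro A hA j hj i hij hi
  obtain ⟨hiA, heA⟩ := mem_links hA
  have hjlt : j < e := mem_range.1 (links_subs hsub A hA hj)
  have hje : j ≠ e := by omega
  have hie : i ≠ e := by omega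
  have hjF : j ∈ insert e A := mem_insert_of_mem hj
  have hiF : i ∉ insert e A := by
    intro h
    rcases mem_insert.1 h with h | h
    · exact hie h
    · exact hi h
  have := hsh _ hiA j hjF i hij hiF
  have heq : insert i ((insert e A).erase j) = insert e (insert i (A.erase j)) := by
    rw [erase_insert_of_ne hje.symm]
    · exact Finset.insert_comm i e (A.erase j)
  rw [heq] at this
  have heX : e ∉ insert i (A.erase j) := by
    intro hmem
    rcases mem_insert.1 hmem with h | h
    · exact hie h.symm
    · exact heA (mem_of_mem_erase h)
  have h2 := links_mem this (mem_insert_self _ _)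
  rwa [erase_insert heX] at h2


variable {𝓖 𝓐 𝓑 : Fam} {F A B U B₀ : Finset ℕ} {k a e n m : ℕ}

/-- key: links of shifted cross-intersecting families are cross-intersecting -/
lemma links_cross (hroom : 2*a ≤ e + 1)
    (hsubA : ∀ F ∈ 𝓐, F ⊆ range (e+1)) (hsubB : ∀ F ∈ 𝓑, F ⊆ range (e+1))
    (hszA : ∀ F ∈ 𝓐, F.card = a) (hszB : ∀ F ∈ 𝓑, F.card = a)
    (hshB : Shifted 𝓑) (hc : Cross 𝓐 𝓑) :
    Cross (links e 𝓐) (links e 𝓑) := by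
  intro A' hA' B' hB'
  obtain ⟨hAmem, heA⟩ := mem_links hA'
  obtain ⟨hBmem, heB⟩ := mem_links hB'
  by_contra hemp
  rw [not_nonempty_iff_eq_empty] at hemp
  -- find x < e outside A' ∪ B'
  have hA'card : A'.card = a - 1 := by
    have := hszA _ hAmem
    rw [card_insert_of_notMem heA] at this
    omega
  have hB'card : B'.card = a - 1 := by
    have := hszB _ hBmem
    rw [card_insert_of_notMem heB] at this
    omega
  have ha1 : 1 ≤ a := by
    have := hszA _ hAmem
    have h0 : 0 < (insert e A').card := card_pos.2 ⟨e, mem_insert_self _ _⟩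
    omega
  have hcu : (A' ∪ B').card < e := by
    calc (A' ∪ B').card ≤ A'.card + B'.card := card_union_le _ _
    _ = (a-1) + (a-1) := by rw [hA'card, hB'card]
    _ < e := by omega
  have hex : (range e \ (A' ∪ B')).Nonempty := by
    rw [← card_pos]
    have := le_card_sdiff (A' ∪ B') (range e)
    rw [card_range] at this
    omega
  obtain ⟨x, hx⟩ := hex
  rw [mem_sdiff, mem_range, mem_union] at hx
  push_neg at hx
  obtain ⟨hxe, hxA', hxB'⟩ := hx
  -- shift B = insert e B' at (x, e)
  have hxB : x ∉ insert e B' := by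
    intro h
    rcases mem_insert.1 h with h | h
    · omega
    · exact hxB' h
  have hB2 : insert x ((insert e B').erase e) ∈ 𝓑 :=
    hshB _ hBmem e (mem_insert_self _ _) x hxe hxB
  rw [erase_insert heB] at hB2
  -- now A = insert e A' must meet insert x B'
  obtain ⟨z, hz⟩ := hc _ hAmem _ hB2
  rw [mem_inter] at hz
  obtain ⟨hz1, hz2⟩ := hz
  rcases mem_insert.1 hz2 with rfl | hzB'
  · rcases mem_insert.1 hz1 with h | h
    · omega
    · exact hxA' h
  · have hze : z ≠ e := fun h => heB (h ▸ hzB')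
    rcases mem_insert.1 hz1 with h | hzA'
    · exact hze h
    · have : z ∈ A' ∩ B' := mem_inter.2 ⟨hzA', hzB'⟩
      rw [hemp] at this
      exact notMem_empty _ this

/-- a nonempty shifted uniform family has a member avoiding the top element -/
lemma exists_not_top (ha : a + 1 ≤ e) (hne : 𝓖.Nonempty) (hsh : Shifted 𝓖)
    (hsz : ∀ F ∈ 𝓖, F.card = a) : ∃ F ∈ 𝓖, e ∉ F := by
  obtain ⟨A, hA⟩ := hne
  by_cases he : e ∈ A
  · have hex : (range e \ A).Nonempty := by
      rw [← card_pos]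
      have := le_card_sdiff A (range e)
      rw [card_range, hsz A hA] at this
      omega
    obtain ⟨x, hx⟩ := hex
    rw [mem_sdiff, mem_range] at hx
    refine ⟨insert x (A.erase e), hsh A hA e he x hx.1 hx.2, ?_⟩
    intro h
    rcases mem_insert.1 h with h | h
    · omega
    · exact (mem_erase.1 h).1 rfl
  · exact ⟨A, hA, he⟩

lemma bar_mem (h : F ∈ bar e 𝓖) : F ∈ 𝓖 ∧ e ∉ F := mem_filter.1 h

lemma bar_sized (hsz : ∀ F ∈ 𝓖, F.card = a) : ∀ F ∈ bar e 𝓖, F.card = a :=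
  fun F hF => hsz F (bar_mem hF).1

lemma bar_inter (hint : Inter 𝓖) : Inter (bar e 𝓖) :=
  fun A hA B hB => hint A (bar_mem hA).1 B (bar_mem hB).1

lemma links_card (e : ℕ) (𝓖 : Fam) :
    (links e 𝓖).card = (𝓖.filter (fun F => e ∈ F)).card := by
  apply card_image_of_injOn
  intro A hA B hB h
  rw [mem_coe, mem_filter] at hA hB
  have h' : A.erase e = B.erase e := h
  rw [← insert_erase hA.2, ← insert_erase hB.2, h']

/-- shifted EKR -/
lemma lemE : ∀ m k (𝓖 : Fam), 2*k ≤ m → (∀ H ∈ 𝓖, H ⊆ range m) →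
    (∀ H ∈ 𝓖, H.card = k) → Inter 𝓖 → Shifted 𝓖 → 𝓖.card ≤ (m-1).choose (k-1) := by
  intro m
  induction m using Nat.strong_induction_on with
  | _ m IH =>
    intro k 𝓖 hkm hsub hsz hint hsh
    rcases Nat.eq_zero_or_pos k with rfl | hk1
    · have h0 : 𝓖 = ∅ := by
        rw [eq_empty_iff_forall_notMem]
        intro H hH
        obtain ⟨z, hz⟩ := hint H hH H hH
        have hHe : H = ∅ := card_eq_zero.1 (hsz H hH)
        rw [hHe] at hz
        simp at hz
      simp [h0]
    rcases eq_or_lt_of_le (show 1 ≤ k from hk1) with hk1' | hk2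
    · -- k = 1
      have hk1'' : k = 1 := by omega
      subst hk1''
      have hcard1 : 𝓖.card ≤ 1 := by
        apply card_le_one.2
        intro A hA B hB
        obtain ⟨x, hx⟩ := card_eq_one.1 (hsz A hA)
        obtain ⟨y, hy⟩ := card_eq_one.1 (hsz B hB)
        obtain ⟨z, hz⟩ := hint A hA B hB
        rw [mem_inter, hx, hy, mem_singleton, mem_singleton] at hz
        have hxy : x = y := by omega
        rw [hx, hy, hxy]
      calc 𝓖.card ≤ 1 := hcard1
        _ ≤ (m-1).choose 0 := by simp
    · -- k ≥ 2
      by_cases hm2k : m = 2*k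
      · subst hm2k
        exact lemB (by omega) hsub hsz hint
      · -- m > 2k
        have hm : 2*k + 1 ≤ m := by omega
        have hsub' : ∀ H ∈ 𝓖, H ⊆ range ((m-1)+1) := by
          have hmm : (m-1)+1 = m := by omega
          rw [hmm]; exact hsub
        have hbar := IH (m-1) (by omega) k (bar (m-1) 𝓖) (by omega) (bar_subs hsub')
          (bar_sized hsz) (bar_inter hint) (bar_shifted hsub' hsh)
        have hlinksInter : Inter (links (m-1) 𝓖) :=
          links_cross (a := k) (by omega) hsub' hsub' hsz hsz hsh hint
        have hlinks := IH (m-1) (by omega) (k-1) (links (m-1) 𝓖) (by omega)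
          (links_subs hsub') (links_sized hsz) hlinksInter (links_shifted hsub' hsh)
        have hsplit := card_split (m-1) 𝓖
        have e3 : m - 1 - 1 = m - 2 := by omega
        have e4 : k - 1 - 1 = k - 2 := by omega
        rw [e3] at hbar hlinks
        rw [e4] at hlinks
        have hp : (m-1).choose (k-1) = (m-2).choose (k-2) + (m-2).choose (k-1) := by
          have e1 : m-1 = (m-2)+1 := by omega
          have e2 : k-1 = (k-2)+1 := by omega
          rw [e1, e2, Nat.choose_succ_succ]
        omega

/-- shifted EKR with all members meeting {1,…,t}, t ≥ k+1 -/
lemma lemD : ∀ m k t (𝓗 : Fam), 1 ≤ k → 2*k ≤ m → k+1 ≤ t →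
    (∀ H ∈ 𝓗, H ⊆ range m) → (∀ H ∈ 𝓗, H.card = k) → Inter 𝓗 → Shifted 𝓗 →
    (∀ H ∈ 𝓗, ∃ x ∈ H, 1 ≤ x ∧ x ≤ t) →
    𝓗.card + (m-1-t).choose (k-1) ≤ (m-1).choose (k-1) := by
  intro m
  induction m using Nat.strong_induction_on with
  | _ m IH =>
    intro k t 𝓗 hk hkm hkt hsub hsz hint hsh hmeet
    rcases eq_or_lt_of_le hk with hk1 | hk2
    · -- k = 1 : family must be empty
      have hk1' : k = 1 := by omega
      subst hk1'
      have h0 : 𝓗 = ∅ := by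
        rw [eq_empty_iff_forall_notMem]
        intro H hH
        obtain ⟨x, hxH, hx1, hxt⟩ := hmeet H hH
        have hHx : H = {x} := by
          obtain ⟨y, hy⟩ := card_eq_one.1 (hsz H hH)
          rw [hy] at hxH ⊢
          rw [mem_singleton] at hxH
          rw [hxH]
        have h0H : (0:ℕ) ∉ H := by rw [hHx]; simp; omega
        have := hsh H hH x hxH 0 (by omega) h0H
        rw [hHx] at this
        simp only [erase_singleton] at this
        obtain ⟨y, hyH, hy1, _⟩ := hmeet _ this
        simp only [insert_empty_eq, mem_singleton] at hyH
        omega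
      rw [h0]
      simp
    · -- k ≥ 2
      by_cases hmt : m ≤ t + 1
      · -- trivial meeting condition; use plain shifted EKR
        have hz : (m-1-t).choose (k-1) = 0 := by
          have : m - 1 - t = 0 := by omega
          rw [this]
          exact Nat.choose_eq_zero_of_lt (by omega)
        rw [hz]
        have := lemE m k 𝓗 hkm hsub hsz hint hsh
        omega
      · by_cases hm2k : m = 2*k
        · -- base m = 2k
          have hz : (m-1-t).choose (k-1) = 0 := by
            exact Nat.choose_eq_zero_of_lt (by omega)
          rw [hz]
          subst hm2k
          have := lemB (by omega) hsub hsz hint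
          omega
        · -- m ≥ 2k+1, m ≥ t+2
          have hm : 2*k + 1 ≤ m := by omega
          have hmt2 : t + 2 ≤ m := by omega
          have hsub' : ∀ H ∈ 𝓗, H ⊆ range ((m-1)+1) := by
            have hmm : (m-1)+1 = m := by omega
            rw [hmm]; exact hsub
          have hbar := IH (m-1) (by omega) k t (bar (m-1) 𝓗) hk (by omega) hkt
            (bar_subs hsub') (bar_sized hsz) (bar_inter hint) (bar_shifted hsub' hsh)
            (fun H hH => hmeet H (bar_mem hH).1)
          have hlinksInter : Inter (links (m-1) 𝓗) :=
            links_cross (a := k) (by omega) hsub' hsub' hsz hsz hsh hint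
          have hlmeet : ∀ A ∈ links (m-1) 𝓗, ∃ x ∈ A, 1 ≤ x ∧ x ≤ t := by
            intro A hA
            obtain ⟨hAmem, heA⟩ := mem_links hA
            obtain ⟨x, hxH, hx1, hxt⟩ := hmeet _ hAmem
            rcases mem_insert.1 hxH with h | h
            · omega
            · exact ⟨x, h, hx1, hxt⟩
          have hlink := IH (m-1) (by omega) (k-1) t (links (m-1) 𝓗) (by omega) (by omega)
            (by omega) (links_subs hsub') (links_sized hsz) hlinksInter
            (links_shifted hsub' hsh) hlmeet
          have hsplit := card_split (m-1) 𝓗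
          have e3 : m - 1 - 1 = m - 2 := by omega
          have e4 : k - 1 - 1 = k - 2 := by omega
          have e5 : m - 1 - 1 - t = m - 2 - t := by omega
          rw [e3] at hbar hlink
          rw [e4] at hlink
          have hp1 : (m-1).choose (k-1) = (m-2).choose (k-2) + (m-2).choose (k-1) := by
            have e1 : m-1 = (m-2)+1 := by omega
            have e2 : k-1 = (k-2)+1 := by omega
            rw [e1, e2, Nat.choose_succ_succ]
          have hp2 : (m-1-t).choose (k-1) = (m-2-t).choose (k-2) + (m-2-t).choose (k-1) := by
            have e1 : m-1-t = (m-2-t)+1 := by omega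
            have e2 : k-1 = (k-2)+1 := by omega
            rw [e1, e2, Nat.choose_succ_succ]
          omega

lemma compress_subs (hij : i < j) (hsub : ∀ F ∈ 𝓖, F ⊆ range n) :
    ∀ F ∈ compress i j 𝓖, F ⊆ range n := by
  intro F hF
  obtain ⟨F₀, h₀, rfl⟩ := mem_compress_elim hF
  exact phi_subset_range hij (hsub F₀ h₀)

lemma compress_sized (hij : i ≠ j) (hsz : ∀ F ∈ 𝓖, F.card = a) :
    ∀ F ∈ compress i j 𝓖, F.card = a := by
  intro F hF
  obtain ⟨F₀, h₀, rfl⟩ := mem_compress_elim hF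
  rw [phi_card hij h₀]
  exact hsz F₀ h₀

lemma compress_nonempty (hij : i ≠ j) (h : 𝓖.Nonempty) : (compress i j 𝓖).Nonempty := by
  rw [← card_pos, card_compress hij, card_pos]
  exact h

lemma not_shifted_witness (h : ¬ Shifted 𝓖) :
    ∃ i j F, i < j ∧ F ∈ 𝓖 ∧ j ∈ F ∧ i ∉ F ∧ sh i j F ∉ 𝓖 := by
  unfold Shifted at h
  push_neg at h
  obtain ⟨F, hF, j, hj, i, hij, hiF, hnm⟩ := h
  exact ⟨i, j, F, hij, hF, hj, hiF, hnm⟩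

lemma cross_symm (h : Cross 𝓐 𝓑) : Cross 𝓑 𝓐 := by
  intro s hs t ht
  obtain ⟨z, hz⟩ := h t ht s hs
  rw [mem_inter] at hz
  exact ⟨z, mem_inter.2 ⟨hz.2, hz.1⟩⟩

/-- helper for lemC: the case where no member of 𝓑 contains the top element M-1 -/
lemma lemC_noTop {M a : ℕ} {𝓐 𝓑 : Fam}
    (IHM : ∀ M' < M, ∀ a' (𝓐' 𝓑' : Fam), 1 ≤ a' → 2*a' ≤ M' →
      (∀ F ∈ 𝓐', F ⊆ range M') → (∀ F ∈ 𝓑', F ⊆ range M') →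
      (∀ F ∈ 𝓐', F.card = a') → (∀ F ∈ 𝓑', F.card = a') →
      Cross 𝓐' 𝓑' → 𝓐'.Nonempty → 𝓑'.Nonempty →
      𝓐'.card + 𝓑'.card + (M'-a').choose a' ≤ M'.choose a' + 1)
    (ha : 1 ≤ a) (hM : 2*a+1 ≤ M)
    (hsubA : ∀ F ∈ 𝓐, F ⊆ range M) (hsubB : ∀ F ∈ 𝓑, F ⊆ range M)
    (hszA : ∀ F ∈ 𝓐, F.card = a) (hszB : ∀ F ∈ 𝓑, F.card = a)
    (hshA : Shifted 𝓐) (hc : Cross 𝓐 𝓑) (hAne : 𝓐.Nonempty) (hBne : 𝓑.Nonempty)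
    (hnoB : ∀ B ∈ 𝓑, (M-1) ∉ B) :
    𝓐.card + 𝓑.card + (M-a).choose a ≤ M.choose a + 1 := by
  have hsubA' : ∀ F ∈ 𝓐, F ⊆ range ((M-1)+1) := by
    have hmm : (M-1)+1 = M := by omega
    rw [hmm]; exact hsubA
  have hsubB' : ∀ B ∈ 𝓑, B ⊆ range (M-1) := by
    intro B hB x hx
    have h1 := mem_range.1 (hsubB B hB hx)
    have h2 : x ≠ M-1 := fun h => hnoB B hB (h ▸ hx)
    exact mem_range.2 (by omega)
  -- bar 𝓐 is nonempty
  obtain ⟨F₁, hF₁, hF₁e⟩ := exists_not_top (e := M-1) (by omega) hAne hshA hszA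
  have hAbar_ne : (bar (M-1) 𝓐).Nonempty := ⟨F₁, mem_filter.2 ⟨hF₁, hF₁e⟩⟩
  -- the links of 𝓐 all meet a fixed B₀ ∈ 𝓑
  obtain ⟨B₀, hB₀⟩ := hBne
  have hmeet : ∀ A' ∈ links (M-1) 𝓐, (A' ∩ B₀).Nonempty := by
    intro A' hA'
    obtain ⟨hAmem, heA⟩ := mem_links hA'
    obtain ⟨z, hz⟩ := hc _ hAmem B₀ hB₀
    rw [mem_inter] at hz
    rcases mem_insert.1 hz.1 with h | h
    · exact absurd (h ▸ hz.2) (hnoB B₀ hB₀)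
    · exact ⟨z, mem_inter.2 ⟨h, hz.2⟩⟩
  have hcount := card_add_le_choose (𝓖 := links (M-1) 𝓐) (U := range (M-1)) (B₀ := B₀)
    (hsubB' B₀ hB₀) (links_subs hsubA') (links_sized hszA) hmeet
  rw [card_range, hszB B₀ hB₀] at hcount
  -- induction on the rest
  have hIH := IHM (M-1) (by omega) a (bar (M-1) 𝓐) 𝓑 ha (by omega)
    (bar_subs hsubA') hsubB' (bar_sized hszA) hszB
    (fun A hA B hB => hc A (bar_mem hA).1 B hB) hAbar_ne ⟨B₀, hB₀⟩
  have hsplit := card_split (M-1) 𝓐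
  -- Pascal identities
  have p1 : M.choose a = (M-1).choose (a-1) + (M-1).choose a := by
    have e2 : a = (a-1)+1 := by omega
    calc M.choose a = ((M-1)+1).choose ((a-1)+1) := by
          have e1 : (M-1)+1 = M := by omega
          rw [e1, ← e2]
      _ = (M-1).choose (a-1) + (M-1).choose ((a-1)+1) := Nat.choose_succ_succ _ _
      _ = (M-1).choose (a-1) + (M-1).choose a := by rw [← e2]
  have q1 : (M-a).choose a = (M-1-a).choose (a-1) + (M-1-a).choose a := by
    have e2 : a = (a-1)+1 := by omega
    calc (M-a).choose a = ((M-1-a)+1).choose ((a-1)+1) := by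
          have e1 : (M-1-a)+1 = M-a := by omega
          rw [e1, ← e2]
      _ = (M-1-a).choose (a-1) + (M-1-a).choose ((a-1)+1) := Nat.choose_succ_succ _ _
      _ = (M-1-a).choose (a-1) + (M-1-a).choose a := by rw [← e2]
  have e5 : M - 1 - a = M - a - 1 := by omega
  rw [e5] at hcount
  have e6 : (M-1) - a = M - a - 1 := by omega
  rw [e6] at hIH
  rw [e5] at q1
  omega

/-- Frankl–Tokushige: nonempty cross-intersecting pair bound -/
lemma lemC : ∀ M a (𝓐 𝓑 : Fam), 1 ≤ a → 2*a ≤ M →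
    (∀ F ∈ 𝓐, F ⊆ range M) → (∀ F ∈ 𝓑, F ⊆ range M) →
    (∀ F ∈ 𝓐, F.card = a) → (∀ F ∈ 𝓑, F.card = a) →
    Cross 𝓐 𝓑 → 𝓐.Nonempty → 𝓑.Nonempty →
    𝓐.card + 𝓑.card + (M-a).choose a ≤ M.choose a + 1 := by
  intro M
  induction M using Nat.strong_induction_on with
  | _ M IHM =>
    suffices h : ∀ w a (𝓐 𝓑 : Fam), fwt 𝓐 + fwt 𝓑 = w → 1 ≤ a → 2*a ≤ M →
        (∀ F ∈ 𝓐, F ⊆ range M) → (∀ F ∈ 𝓑, F ⊆ range M) →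
        (∀ F ∈ 𝓐, F.card = a) → (∀ F ∈ 𝓑, F.card = a) →
        Cross 𝓐 𝓑 → 𝓐.Nonempty → 𝓑.Nonempty →
        𝓐.card + 𝓑.card + (M-a).choose a ≤ M.choose a + 1 by
      intro a 𝓐 𝓑
      exact h (fwt 𝓐 + fwt 𝓑) a 𝓐 𝓑 rfl
    intro w
    induction w using Nat.strong_induction_on with
    | _ w IHw =>
      intro a 𝓐 𝓑 hw ha haM hsubA hsubB hszA hszB hc hAne hBne
      by_cases hshA : Shifted 𝓐
      · by_cases hshB : Shifted 𝓑
        · -- both shifted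
          by_cases hM2a : M = 2*a
          · -- base case M = 2a : complement argument
            subst hM2a
            set 𝓑c := 𝓑.image (fun B => range (2*a) \ B) with h𝓑c
            have hcard : 𝓑c.card = 𝓑.card := by
              apply card_image_of_injOn
              intro A hA B hB h
              have hA' := Finset.sdiff_sdiff_eq_self (hsubB A hA)
              have hB' := Finset.sdiff_sdiff_eq_self (hsubB B hB)
              have h' : range (2*a) \ A = range (2*a) \ B := h
              rw [← hA', ← hB', h']
            have hdisj : Disjoint 𝓐 𝓑c := by
              rw [disjoint_left]
              intro F hF hF'
              obtain ⟨H, hH, hHe⟩ := mem_image.1 hF'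
              obtain ⟨z, hz⟩ := hc F hF H hH
              rw [mem_inter] at hz
              rw [← hHe] at hz
              exact (mem_sdiff.1 hz.1).2 hz.2
            have hsub2 : 𝓐 ∪ 𝓑c ⊆ (range (2*a)).powersetCard a := by
              intro F hF
              rcases mem_union.1 hF with h | h
              · exact mem_powersetCard.2 ⟨hsubA F h, hszA F h⟩
              · obtain ⟨H, hH, hHe⟩ := mem_image.1 h
                refine mem_powersetCard.2 ⟨hHe ▸ sdiff_subset, ?_⟩
                rw [← hHe, card_sdiff_of_subset (hsubB H hH), card_range, hszB H hH]
                omega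
            have hle := card_le_card hsub2
            rw [card_union_of_disjoint hdisj, hcard, card_powersetCard, card_range] at hle
            have e1 : 2*a - a = a := by omega
            rw [e1, Nat.choose_self]
            omega
          · -- M ≥ 2a+1
            have hM : 2*a+1 ≤ M := by omega
            by_cases hBt : ∀ B ∈ 𝓑, (M-1) ∉ B
            · exact lemC_noTop IHM ha hM hsubA hsubB hszA hszB hshA hc hAne hBne hBt
            · by_cases hAt : ∀ A ∈ 𝓐, (M-1) ∉ A
              · have := lemC_noTop IHM ha hM hsubB hsubA hszB hszA hshB
                  (cross_symm hc) hBne hAne hAt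
                omega
              · -- both families have members containing M-1
                push_neg at hBt hAt
                obtain ⟨B₁, hB₁, hB₁t⟩ := hBt
                obtain ⟨A₁, hA₁, hA₁t⟩ := hAt
                have hsubA' : ∀ F ∈ 𝓐, F ⊆ range ((M-1)+1) := by
                  have hmm : (M-1)+1 = M := by omega
                  rw [hmm]; exact hsubA
                have hsubB' : ∀ F ∈ 𝓑, F ⊆ range ((M-1)+1) := by
                  have hmm : (M-1)+1 = M := by omega
                  rw [hmm]; exact hsubB
                have hlc : Cross (links (M-1) 𝓐) (links (M-1) 𝓑) :=
                  links_cross (a := a) (by omega) hsubA' hsubB' hszA hszB hshB hc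
                have hlAne : (links (M-1) 𝓐).Nonempty :=
                  ⟨A₁.erase (M-1), links_mem hA₁ hA₁t⟩
                have hlBne : (links (M-1) 𝓑).Nonempty :=
                  ⟨B₁.erase (M-1), links_mem hB₁ hB₁t⟩
                -- a = 1 is impossible here
                rcases eq_or_lt_of_le ha with ha1 | ha2
                · exfalso
                  obtain ⟨A', hA'⟩ := hlAne
                  obtain ⟨B', hB'⟩ := hlBne
                  obtain ⟨z, hz⟩ := hlc A' hA' B' hB'
                  have : A'.card = a - 1 := links_sized hszA A' hA'
                  have hA'0 : A' = ∅ := card_eq_zero.1 (by omega)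
                  rw [hA'0] at hz
                  simp at hz
                -- bars are nonempty
                obtain ⟨F₁, hF₁, hF₁e⟩ := exists_not_top (e := M-1) (by omega) hAne hshA hszA
                have hAbar_ne : (bar (M-1) 𝓐).Nonempty := ⟨F₁, mem_filter.2 ⟨hF₁, hF₁e⟩⟩
                obtain ⟨G₁, hG₁, hG₁e⟩ := exists_not_top (e := M-1) (by omega) hBne hshB hszB
                have hBbar_ne : (bar (M-1) 𝓑).Nonempty := ⟨G₁, mem_filter.2 ⟨hG₁, hG₁e⟩⟩
                -- two applications of the outer induction hypothesis
                have hIH1 := IHM (M-1) (by omega) a (bar (M-1) 𝓐) (bar (M-1) 𝓑) ha (by omega)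
                  (bar_subs hsubA') (bar_subs hsubB') (bar_sized hszA) (bar_sized hszB)
                  (fun A hA B hB => hc A (bar_mem hA).1 B (bar_mem hB).1) hAbar_ne hBbar_ne
                have hIH2 := IHM (M-1) (by omega) (a-1) (links (M-1) 𝓐) (links (M-1) 𝓑)
                  (by omega) (by omega) (links_subs hsubA') (links_subs hsubB')
                  (links_sized hszA) (links_sized hszB) hlc hlAne hlBne
                have hsplitA := card_split (M-1) 𝓐
                have hsplitB := card_split (M-1) 𝓑
                -- Pascal identities
                have p1 : M.choose a = (M-1).choose (a-1) + (M-1).choose a := by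
                  have e2 : a = (a-1)+1 := by omega
                  calc M.choose a = ((M-1)+1).choose ((a-1)+1) := by
                        have e1 : (M-1)+1 = M := by omega
                        rw [e1, ← e2]
                    _ = (M-1).choose (a-1) + (M-1).choose ((a-1)+1) := Nat.choose_succ_succ _ _
                    _ = (M-1).choose (a-1) + (M-1).choose a := by rw [← e2]
                have q1 : (M-a).choose a = (M-1-a).choose (a-1) + (M-1-a).choose a := by
                  have e2 : a = (a-1)+1 := by omega
                  calc (M-a).choose a = ((M-1-a)+1).choose ((a-1)+1) := by
                        have e1 : (M-1-a)+1 = M-a := by omega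
                        rw [e1, ← e2]
                    _ = (M-1-a).choose (a-1) + (M-1-a).choose ((a-1)+1) :=
                        Nat.choose_succ_succ _ _
                    _ = (M-1-a).choose (a-1) + (M-1-a).choose a := by rw [← e2]
                have q2 : (M-a).choose (a-1) = (M-1-a).choose (a-2) + (M-1-a).choose (a-1) := by
                  have e2 : a - 1 = (a-2)+1 := by omega
                  calc (M-a).choose (a-1) = ((M-1-a)+1).choose ((a-2)+1) := by
                        have e1 : (M-1-a)+1 = M-a := by omega
                        rw [e1, ← e2]
                    _ = (M-1-a).choose (a-2) + (M-1-a).choose ((a-2)+1) :=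
                        Nat.choose_succ_succ _ _
                    _ = (M-1-a).choose (a-2) + (M-1-a).choose (a-1) := by rw [← e2]
                have q3 : 1 ≤ (M-1-a).choose (a-2) := Nat.choose_pos (by omega)
                have e7 : (M-1) - a = M - 1 - a := by omega
                have e8 : (M-1) - (a-1) = M - a := by omega
                rw [e7] at hIH1
                rw [e8] at hIH2
                omega
        · -- 𝓑 not shifted : compress both
          obtain ⟨i, j, F₀, hij, hF₀, hj, hiF, hnm⟩ := not_shifted_witness hshB
          have hjM : j < M := mem_range.1 (hsubB F₀ hF₀ hj)
          have hlt : fwt (compress i j 𝓐) + fwt (compress i j 𝓑) < w := by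
            have h1 := fwt_compress_le (𝓖 := 𝓐) hij
            have h2 := fwt_compress_lt hij hF₀ ⟨hj, hiF, hnm⟩
            omega
          have := IHw _ hlt a (compress i j 𝓐) (compress i j 𝓑) rfl ha haM
            (compress_subs hij hsubA) (compress_subs hij hsubB)
            (compress_sized hij.ne hszA) (compress_sized hij.ne hszB)
            (cross_compress hij hc) (compress_nonempty hij.ne hAne)
            (compress_nonempty hij.ne hBne)
          rwa [card_compress hij.ne, card_compress hij.ne] at this
      · -- 𝓐 not shifted : compress both
        obtain ⟨i, j, F₀, hij, hF₀, hj, hiF, hnm⟩ := not_shifted_witness hshA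
        have hjM : j < M := mem_range.1 (hsubA F₀ hF₀ hj)
        have hlt : fwt (compress i j 𝓐) + fwt (compress i j 𝓑) < w := by
          have h1 := fwt_compress_le (𝓖 := 𝓑) hij
          have h2 := fwt_compress_lt hij hF₀ ⟨hj, hiF, hnm⟩
          omega
        have := IHw _ hlt a (compress i j 𝓐) (compress i j 𝓑) rfl ha haM
          (compress_subs hij hsubA) (compress_subs hij hsubB)
          (compress_sized hij.ne hszA) (compress_sized hij.ne hszB)
          (cross_compress hij hc) (compress_nonempty hij.ne hAne)
          (compress_nonempty hij.ne hBne)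
        rwa [card_compress hij.ne, card_compress hij.ne] at this

/-- Hilton–Milner for shifted families -/
lemma SL : ∀ n r (𝓕 : Fam), 2*r ≤ n →
    (∀ F ∈ 𝓕, F ⊆ range n) → (∀ F ∈ 𝓕, F.card = r) → Inter 𝓕 → Shifted 𝓕 →
    (¬ ∃ a, ∀ F ∈ 𝓕, a ∈ F) →
    𝓕.card + (n-r-1).choose (r-1) ≤ (n-1).choose (r-1) + 1 := by
  intro n
  induction n using Nat.strong_induction_on with
  | _ n IH =>
    intro r 𝓕 hrn hsub hsz hint hsh hnt
    rcases 𝓕.eq_empty_or_nonempty with rfl | hne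
    · exact absurd ⟨0, by simp⟩ hnt
    -- r = 0 impossible
    rcases Nat.eq_zero_or_pos r with rfl | hr1
    · obtain ⟨F₀, hF₀⟩ := hne
      obtain ⟨z, hz⟩ := hint F₀ hF₀ F₀ hF₀
      have : F₀ = ∅ := card_eq_zero.1 (hsz F₀ hF₀)
      rw [this] at hz
      simp at hz
    -- r = 1 impossible
    rcases eq_or_lt_of_le (show 1 ≤ r from hr1) with hr1' | hr2
    · exfalso
      have hr1'' : r = 1 := by omega
      subst hr1''
      obtain ⟨F₀, hF₀⟩ := hne
      obtain ⟨x, hx⟩ := card_eq_one.1 (hsz F₀ hF₀)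
      refine hnt ⟨x, fun G hG => ?_⟩
      obtain ⟨z, hz⟩ := hint F₀ hF₀ G hG
      rw [mem_inter, hx, mem_singleton] at hz
      exact hz.1 ▸ hz.2
    -- now r ≥ 2
    by_cases hn2r : n = 2*r
    · subst hn2r
      have hlemB := lemB (by omega) hsub hsz hint
      have e1 : 2*r - r - 1 = r - 1 := by omega
      rw [e1, Nat.choose_self]
      omega
    · -- n ≥ 2r + 1
      have hn : 2*r + 1 ≤ n := by omega
      -- step 1 : Icc 1 r ∈ 𝓕
      have hB₀ : Icc 1 r ∈ 𝓕 := by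
        push_neg at hnt
        obtain ⟨F₂, hF₂, h0F₂⟩ := hnt 0
        have hcardIcc : (Icc 1 r).card = r := by
          rw [Nat.card_Icc]
          omega
        have climb : ∀ w F, F ∈ 𝓕 → 0 ∉ F → wt F ≤ w → Icc 1 r ∈ 𝓕 := by
          intro w
          induction w using Nat.strong_induction_on with
          | _ w IHc =>
            intro F hF h0F hwF
            by_cases hFeq : F = Icc 1 r
            · exact hFeq ▸ hF
            · have hcF : F.card = r := hsz F hF
              have hns1 : ¬ Icc 1 r ⊆ F := by
                intro hss
                exact hFeq (Finset.eq_of_subset_of_card_le hss (by omega)).symm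
              have hns2 : ¬ F ⊆ Icc 1 r := by
                intro hss
                exact hFeq (Finset.eq_of_subset_of_card_le hss (by omega))
              obtain ⟨i, hiIcc, hiF⟩ := not_subset.1 hns1
              obtain ⟨j, hjF, hjIcc⟩ := not_subset.1 hns2
              rw [mem_Icc] at hiIcc
              rw [mem_Icc] at hjIcc
              have hj0 : j ≠ 0 := fun h => h0F (h ▸ hjF)
              have hij : i < j := by omega
              have hF' : insert i (F.erase j) ∈ 𝓕 := hsh F hF j hjF i hij hiF
              have h0F' : 0 ∉ insert i (F.erase j) := by
                intro h
                rcases mem_insert.1 h with h | h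
                · omega
                · exact h0F (mem_of_mem_erase h)
              have hwlt : wt (insert i (F.erase j)) < wt F := wt_sh_lt hij hjF hiF
              exact IHc (wt (insert i (F.erase j))) (by omega) _ hF' h0F' le_rfl
        exact climb (wt F₂) F₂ hF₂ h0F₂ le_rfl
      have hB₀top : (n-1) ∉ Icc 1 r := by
        rw [mem_Icc]
        omega
      have hsub' : ∀ F ∈ 𝓕, F ⊆ range ((n-1)+1) := by
        have hmm : (n-1)+1 = n := by omega
        rw [hmm]; exact hsub
      -- bar is nontrivial
      have hbarnt : ¬ ∃ a, ∀ F ∈ bar (n-1) 𝓕, a ∈ F := by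
        rintro ⟨a, haa⟩
        have haB₀ : a ∈ Icc 1 r := haa _ (mem_filter.2 ⟨hB₀, hB₀top⟩)
        rw [mem_Icc] at haB₀
        have h0Icc : (0:ℕ) ∉ Icc 1 r := by rw [mem_Icc]; omega
        have hB₀' : insert 0 ((Icc 1 r).erase a) ∈ 𝓕 :=
          hsh _ hB₀ a (mem_Icc.2 ⟨haB₀.1, haB₀.2⟩) 0 (by omega) h0Icc
        have htop' : (n-1) ∉ insert 0 ((Icc 1 r).erase a) := by
          intro h
          rcases mem_insert.1 h with h | h
          · omega
          · exact hB₀top (mem_of_mem_erase h)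
        have := haa _ (mem_filter.2 ⟨hB₀', htop'⟩)
        rcases mem_insert.1 this with h | h
        · omega
        · exact (mem_erase.1 h).1 rfl
      have hbar := IH (n-1) (by omega) r (bar (n-1) 𝓕) (by omega) (bar_subs hsub')
        (bar_sized hsz) (bar_inter hint) (bar_shifted hsub' hsh) hbarnt
      -- links, via lemD
      have hlinksInter : Inter (links (n-1) 𝓕) :=
        links_cross (a := r) (by omega) hsub' hsub' hsz hsz hsh hint
      have hlmeet : ∀ L ∈ links (n-1) 𝓕, ∃ x ∈ L, 1 ≤ x ∧ x ≤ r := by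
        intro L hL
        obtain ⟨hLmem, heL⟩ := mem_links hL
        obtain ⟨z, hz⟩ := hint _ hLmem _ hB₀
        rw [mem_inter, mem_Icc] at hz
        rcases mem_insert.1 hz.1 with h | h
        · omega
        · exact ⟨z, h, hz.2.1, hz.2.2⟩
      have hlink := lemD (n-1) (r-1) r (links (n-1) 𝓕) (by omega) (by omega) (by omega)
        (links_subs hsub') (links_sized hsz) hlinksInter (links_shifted hsub' hsh) hlmeet
      have hsplit := card_split (n-1) 𝓕
      -- index normalisation
      have e1 : (n-1) - r - 1 = n - r - 2 := by omega
      have e2 : (n-1) - 1 = n - 2 := by omega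
      have e3 : n - 2 - r = n - r - 2 := by omega
      have e4 : (r-1) - 1 = r - 2 := by omega
      rw [e1, e2] at hbar
      rw [e2] at hlink
      rw [e3, e4] at hlink
      -- Pascal identities
      have p1 : (n-1).choose (r-1) = (n-2).choose (r-2) + (n-2).choose (r-1) := by
        have er : r - 1 = (r-2)+1 := by omega
        calc (n-1).choose (r-1) = ((n-2)+1).choose ((r-2)+1) := by
              have en : (n-2)+1 = n-1 := by omega
              rw [en, ← er]
          _ = (n-2).choose (r-2) + (n-2).choose ((r-2)+1) := Nat.choose_succ_succ _ _
          _ = (n-2).choose (r-2) + (n-2).choose (r-1) := by rw [← er]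
      have p2 : (n-r-1).choose (r-1) = (n-r-2).choose (r-2) + (n-r-2).choose (r-1) := by
        have er : r - 1 = (r-2)+1 := by omega
        calc (n-r-1).choose (r-1) = ((n-r-2)+1).choose ((r-2)+1) := by
              have en : (n-r-2)+1 = n-r-1 := by omega
              rw [en, ← er]
          _ = (n-r-2).choose (r-2) + (n-r-2).choose ((r-2)+1) := Nat.choose_succ_succ _ _
          _ = (n-r-2).choose (r-2) + (n-r-2).choose (r-1) := by rw [← er]
      omega

/-- pair-cover case, with cover {n-2, n-1} -/
lemma PCcore (n r : ℕ) (𝓖 : Fam) (hr : 2 ≤ r) (hn : 2*r+1 ≤ n)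
    (hsub : ∀ F ∈ 𝓖, F ⊆ range n) (hsz : ∀ F ∈ 𝓖, F.card = r) (hint : Inter 𝓖)
    (hnt : ¬ ∃ a, ∀ F ∈ 𝓖, a ∈ F)
    (hcov : ∀ F ∈ 𝓖, (n-2) ∈ F ∨ (n-1) ∈ F) :
    𝓖.card + (n-r-1).choose (r-1) ≤ (n-1).choose (r-1) + 1 := by
  classical
  have hn5 : 5 ≤ n := by omega
  set 𝓐2 := 𝓖.filter (fun F => ¬ (n-1) ∈ F) with h𝓐2
  set 𝓖1 := 𝓖.filter (fun F => (n-1) ∈ F) with h𝓖1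
  set 𝓑2 := 𝓖1.filter (fun F => ¬ (n-2) ∈ F) with h𝓑2
  set 𝓓2 := 𝓖1.filter (fun F => (n-2) ∈ F) with h𝓓2
  have hsplit1 : 𝓖1.card + 𝓐2.card = 𝓖.card :=
    card_filter_add_card_filter_not _
  have hsplit2 : 𝓓2.card + 𝓑2.card = 𝓖1.card :=
    card_filter_add_card_filter_not _
  have h𝓐2n2 : ∀ F ∈ 𝓐2, (n-2) ∈ F ∧ (n-1) ∉ F := by
    intro F hF
    rw [h𝓐2, mem_filter] at hF
    rcases hcov F hF.1 with h | h
    · exact ⟨h, hF.2⟩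
    · exact absurd h hF.2
  have h𝓑2n1 : ∀ F ∈ 𝓑2, (n-1) ∈ F ∧ (n-2) ∉ F := by
    intro F hF
    rw [h𝓑2, mem_filter, h𝓖1, mem_filter] at hF
    exact ⟨hF.1.2, hF.2⟩
  have h𝓐2mem : ∀ F ∈ 𝓐2, F ∈ 𝓖 := fun F hF => (mem_filter.1 hF).1
  have h𝓑2mem : ∀ F ∈ 𝓑2, F ∈ 𝓖 := fun F hF => (mem_filter.1 (mem_filter.1 hF).1).1
  set 𝓐 := 𝓐2.image (fun F => F.erase (n-2)) with h𝓐
  set 𝓑 := 𝓑2.image (fun F => F.erase (n-1)) with h𝓑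
  have hcardA : 𝓐.card = 𝓐2.card := by
    apply card_image_of_injOn
    intro A hA B hB h
    rw [mem_coe] at hA hB
    have h' : A.erase (n-2) = B.erase (n-2) := h
    rw [← insert_erase (h𝓐2n2 A hA).1, ← insert_erase (h𝓐2n2 B hB).1, h']
  have hcardB : 𝓑.card = 𝓑2.card := by
    apply card_image_of_injOn
    intro A hA B hB h
    rw [mem_coe] at hA hB
    have h' : A.erase (n-1) = B.erase (n-1) := h
    rw [← insert_erase (h𝓑2n1 A hA).1, ← insert_erase (h𝓑2n1 B hB).1, h']
  have hsubA : ∀ A ∈ 𝓐, A ⊆ range (n-2) := by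
    intro A hA z hz
    obtain ⟨F, hF, rfl⟩ := mem_image.1 hA
    have h1 := mem_range.1 (hsub F (h𝓐2mem F hF) (mem_of_mem_erase hz))
    have h2 := (mem_erase.1 hz).1
    have h3 : z ≠ n-1 := fun h => (h𝓐2n2 F hF).2 (h ▸ mem_of_mem_erase hz)
    exact mem_range.2 (by omega)
  have hsubB : ∀ B ∈ 𝓑, B ⊆ range (n-2) := by
    intro B hB z hz
    obtain ⟨F, hF, rfl⟩ := mem_image.1 hB
    have h1 := mem_range.1 (hsub F (h𝓑2mem F hF) (mem_of_mem_erase hz))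
    have h2 := (mem_erase.1 hz).1
    have h3 : z ≠ n-2 := fun h => (h𝓑2n1 F hF).2 (h ▸ mem_of_mem_erase hz)
    exact mem_range.2 (by omega)
  have hszA : ∀ A ∈ 𝓐, A.card = r-1 := by
    intro A hA
    obtain ⟨F, hF, rfl⟩ := mem_image.1 hA
    rw [card_erase_of_mem (h𝓐2n2 F hF).1, hsz F (h𝓐2mem F hF)]
  have hszB : ∀ B ∈ 𝓑, B.card = r-1 := by
    intro B hB
    obtain ⟨F, hF, rfl⟩ := mem_image.1 hB
    rw [card_erase_of_mem (h𝓑2n1 F hF).1, hsz F (h𝓑2mem F hF)]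
  have hcross : Cross 𝓐 𝓑 := by
    intro A hA B hB
    obtain ⟨F, hF, rfl⟩ := mem_image.1 hA
    obtain ⟨G, hG, rfl⟩ := mem_image.1 hB
    obtain ⟨z, hz⟩ := hint F (h𝓐2mem F hF) G (h𝓑2mem G hG)
    rw [mem_inter] at hz
    have hz1 : z ≠ n-1 := fun h => (h𝓐2n2 F hF).2 (h ▸ hz.1)
    have hz2 : z ≠ n-2 := fun h => (h𝓑2n1 G hG).2 (h ▸ hz.2)
    exact ⟨z, mem_inter.2 ⟨mem_erase.2 ⟨hz2, hz.1⟩, mem_erase.2 ⟨hz1, hz.2⟩⟩⟩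
  have hAne : 𝓐.Nonempty := by
    push_neg at hnt
    obtain ⟨F, hF, hFn⟩ := hnt (n-1)
    exact ⟨F.erase (n-2), mem_image_of_mem _ (mem_filter.2 ⟨hF, hFn⟩)⟩
  have hBne : 𝓑.Nonempty := by
    push_neg at hnt
    obtain ⟨F, hF, hFn⟩ := hnt (n-2)
    have hFn1 : (n-1) ∈ F := by
      rcases hcov F hF with h | h
      · exact absurd h hFn
      · exact h
    exact ⟨F.erase (n-1), mem_image_of_mem _
      (mem_filter.2 ⟨mem_filter.2 ⟨hF, hFn1⟩, hFn⟩)⟩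
  have hC := lemC (n-2) (r-1) 𝓐 𝓑 (by omega) (by omega) hsubA hsubB hszA hszB
    hcross hAne hBne
  have e1 : (n-2) - (r-1) = n - r - 1 := by omega
  rw [e1] at hC
  -- bound on 𝓓2
  have hD : 𝓓2.card ≤ (n-2).choose (r-2) := by
    set ψ := fun F : Finset ℕ => (F.erase (n-1)).erase (n-2) with hψ
    have h𝓓2mem : ∀ F ∈ 𝓓2, F ∈ 𝓖 ∧ (n-1) ∈ F ∧ (n-2) ∈ F := by
      intro F hF
      rw [h𝓓2, mem_filter, h𝓖1, mem_filter] at hF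
      exact ⟨hF.1.1, hF.1.2, hF.2⟩
    have hrec : ∀ F ∈ 𝓓2, insert (n-1) (insert (n-2) (ψ F)) = F := by
      intro F hF
      obtain ⟨hFG, h1, h2⟩ := h𝓓2mem F hF
      have h21 : (n-2) ∈ F.erase (n-1) := mem_erase.2 ⟨by omega, h2⟩
      rw [hψ]
      simp only []
      rw [insert_erase h21, insert_erase h1]
    have hcard : (𝓓2.image ψ).card = 𝓓2.card := by
      apply card_image_of_injOn
      intro A hA B hB h
      rw [mem_coe] at hA hB
      rw [← hrec A hA, ← hrec B hB, h]
    rw [← hcard]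
    apply card_le_choose (U := range (n-2)) (k := r-2) ?_ ?_ |>.trans
    · rw [card_range]
    · intro S hS z hz
      obtain ⟨F, hF, rfl⟩ := mem_image.1 hS
      obtain ⟨hFG, h1, h2⟩ := h𝓓2mem F hF
      have hzn := mem_range.1 (hsub F hFG (mem_of_mem_erase (mem_of_mem_erase hz)))
      have hz2 := (mem_erase.1 hz).1
      have hz1 := (mem_erase.1 (mem_of_mem_erase hz)).1
      exact mem_range.2 (by omega)
    · intro S hS
      obtain ⟨F, hF, rfl⟩ := mem_image.1 hS
      obtain ⟨hFG, h1, h2⟩ := h𝓓2mem F hF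
      rw [hψ]
      simp only []
      rw [card_erase_of_mem (mem_erase.2 ⟨by omega, h2⟩), card_erase_of_mem h1,
        hsz F hFG]
      omega
  -- Pascal
  have p1 : (n-1).choose (r-1) = (n-2).choose (r-2) + (n-2).choose (r-1) := by
    have er : r - 1 = (r-2)+1 := by omega
    calc (n-1).choose (r-1) = ((n-2)+1).choose ((r-2)+1) := by
          have en : (n-2)+1 = n-1 := by omega
          rw [en, ← er]
      _ = (n-2).choose (r-2) + (n-2).choose ((r-2)+1) := Nat.choose_succ_succ _ _
      _ = (n-2).choose (r-2) + (n-2).choose (r-1) := by rw [← er]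
  omega

/-- pair-cover case for a general pair {x, y} -/
lemma PC (n r x y : ℕ) (𝓖 : Fam) (hr : 2 ≤ r) (hn : 2*r+1 ≤ n)
    (hxy : x ≠ y) (hx : x < n) (hy : y < n)
    (hsub : ∀ F ∈ 𝓖, F ⊆ range n) (hsz : ∀ F ∈ 𝓖, F.card = r) (hint : Inter 𝓖)
    (hnt : ¬ ∃ a, ∀ F ∈ 𝓖, a ∈ F)
    (hcov : ∀ F ∈ 𝓖, x ∈ F ∨ y ∈ F) :
    𝓖.card + (n-r-1).choose (r-1) ≤ (n-1).choose (r-1) + 1 := by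
  classical
  have hn5 : 5 ≤ n := by omega
  have swap_lt : ∀ u v a : ℕ, u < n → v < n → a < n → (Equiv.swap u v) a < n := by
    intro u v a hu hv ha
    rw [Equiv.swap_apply_def]
    split_ifs <;> omega
  set y₁ := (Equiv.swap x (n-2)) y with hy₁
  set σ := (Equiv.swap x (n-2)).trans (Equiv.swap y₁ (n-1)) with hσ
  have hy₁lt : y₁ < n := swap_lt _ _ _ hx (by omega) hy
  have hσlt : ∀ a < n, σ a < n := by
    intro a ha
    rw [hσ]
    exact swap_lt _ _ _ hy₁lt (by omega) (swap_lt _ _ _ hx (by omega) ha)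
  have hy₁ne : y₁ ≠ n-2 := by
    intro h
    have h2 : (Equiv.swap x (n-2)) x = n-2 := Equiv.swap_apply_left _ _
    have := (Equiv.swap x (n-2)).injective (h.trans h2.symm)
    exact hxy this.symm
  have hσx : σ x = n-2 := by
    rw [hσ]
    simp only [Equiv.trans_apply, Equiv.swap_apply_left]
    exact Equiv.swap_apply_of_ne_of_ne (Ne.symm hy₁ne) (by omega)
  have hσy : σ y = n-1 := by
    rw [hσ]
    simp only [Equiv.trans_apply, ← hy₁]
    exact Equiv.swap_apply_left _ _
  set 𝓖' := 𝓖.image (fun F => F.image (σ : ℕ → ℕ)) with h𝓖'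
  have himginj : ∀ F G : Finset ℕ, F.image (σ : ℕ → ℕ) = G.image (σ : ℕ → ℕ) → F = G := by
    intro F G h
    ext z
    constructor
    · intro hz
      have : σ z ∈ G.image (σ : ℕ → ℕ) := h ▸ mem_image_of_mem _ hz
      obtain ⟨u, hu, huz⟩ := mem_image.1 this
      rwa [← σ.injective huz]
    · intro hz
      have : σ z ∈ F.image (σ : ℕ → ℕ) := h.symm ▸ mem_image_of_mem _ hz
      obtain ⟨u, hu, huz⟩ := mem_image.1 this
      rwa [← σ.injective huz]
  have hcard' : 𝓖'.card = 𝓖.card :=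
    card_image_of_injOn (fun A _ B _ h => himginj A B h)
  have hsub' : ∀ F ∈ 𝓖', F ⊆ range n := by
    intro F hF z hz
    obtain ⟨G, hG, rfl⟩ := mem_image.1 hF
    obtain ⟨u, hu, rfl⟩ := mem_image.1 hz
    exact mem_range.2 (hσlt u (mem_range.1 (hsub G hG hu)))
  have hsz' : ∀ F ∈ 𝓖', F.card = r := by
    intro F hF
    obtain ⟨G, hG, rfl⟩ := mem_image.1 hF
    rw [card_image_of_injective _ σ.injective]
    exact hsz G hG
  have hint' : Inter 𝓖' := by
    intro A hA B hB
    obtain ⟨F, hF, rfl⟩ := mem_image.1 hA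
    obtain ⟨G, hG, rfl⟩ := mem_image.1 hB
    obtain ⟨z, hz⟩ := hint F hF G hG
    rw [mem_inter] at hz
    exact ⟨σ z, mem_inter.2 ⟨mem_image_of_mem _ hz.1, mem_image_of_mem _ hz.2⟩⟩
  have hnt' : ¬ ∃ a, ∀ F ∈ 𝓖', a ∈ F := by
    rintro ⟨a, haa⟩
    refine hnt ⟨σ.symm a, fun F hF => ?_⟩
    have := haa _ (mem_image_of_mem _ hF)
    obtain ⟨u, hu, huz⟩ := mem_image.1 this
    rwa [← huz, Equiv.symm_apply_apply]
  have hcov' : ∀ F ∈ 𝓖', (n-2) ∈ F ∨ (n-1) ∈ F := by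
    intro F hF
    obtain ⟨G, hG, rfl⟩ := mem_image.1 hF
    rcases hcov G hG with h | h
    · exact Or.inl (hσx ▸ mem_image_of_mem _ h)
    · exact Or.inr (hσy ▸ mem_image_of_mem _ h)
  have := PCcore n r 𝓖' hr hn hsub' hsz' hint' hnt' hcov'
  rwa [hcard'] at this

/-- main proposition over ℕ : reduction by compressions -/
lemma MP : ∀ w n r (𝓖 : Fam), fwt 𝓖 = w → 2*r+1 ≤ n →
    (∀ F ∈ 𝓖, F ⊆ range n) → (∀ F ∈ 𝓖, F.card = r) → Inter 𝓖 →
    (¬ ∃ a, ∀ F ∈ 𝓖, a ∈ F) →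
    𝓖.card + (n-r-1).choose (r-1) ≤ (n-1).choose (r-1) + 1 := by
  intro w
  induction w using Nat.strong_induction_on with
  | _ w IH =>
    intro n r 𝓖 hw hn hsub hsz hint hnt
    rcases 𝓖.eq_empty_or_nonempty with rfl | hne
    · exact absurd ⟨0, by simp⟩ hnt
    rcases Nat.eq_zero_or_pos r with rfl | hr1
    · obtain ⟨F₀, hF₀⟩ := hne
      obtain ⟨z, hz⟩ := hint F₀ hF₀ F₀ hF₀
      have : F₀ = ∅ := card_eq_zero.1 (hsz F₀ hF₀)
      rw [this] at hz
      simp at hz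
    rcases eq_or_lt_of_le (show 1 ≤ r from hr1) with hr1' | hr2
    · exfalso
      have hr1'' : r = 1 := by omega
      subst hr1''
      obtain ⟨F₀, hF₀⟩ := hne
      obtain ⟨x, hx⟩ := card_eq_one.1 (hsz F₀ hF₀)
      refine hnt ⟨x, fun G hG => ?_⟩
      obtain ⟨z, hz⟩ := hint F₀ hF₀ G hG
      rw [mem_inter, hx, mem_singleton] at hz
      exact hz.1 ▸ hz.2
    by_cases hsh : Shifted 𝓖
    · exact SL n r 𝓖 (by omega) hsub hsz hint hsh hnt
    · obtain ⟨i, j, F₀, hij, hF₀, hj, hiF, hnm⟩ := not_shifted_witness hsh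
      have hjn : j < n := mem_range.1 (hsub F₀ hF₀ hj)
      by_cases htriv : ∃ a, ∀ F' ∈ compress i j 𝓖, a ∈ F'
      · exact PC n r i j 𝓖 (by omega) hn hij.ne (by omega) hjn hsub hsz hint hnt
          (cover_of_compress_trivial hij hnt htriv)
      · have hlt : fwt (compress i j 𝓖) < w :=
          hw ▸ fwt_compress_lt hij hF₀ ⟨hj, hiF, hnm⟩
        have := IH _ hlt n r (compress i j 𝓖) rfl hn (compress_subs hij hsub)
          (compress_sized hij.ne hsz) (cross_compress hij hint) htriv
        rwa [card_compress hij.ne] at this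

end HM

/-- **Hilton–Milner theorem.** If `r < n/2` and `𝓕` is an intersecting family
of `r`-element subsets of `{1, …, n}` with no common element, then
`|𝓕| ≤ C(n-1, r-1) - C(n-r-1, r-1) + 1`. -/
theorem hilton_milner (n r : ℕ) (hr : 2 * r < n)
    (𝓕 : Finset (Finset (Fin n)))
    (hcard : ∀ s ∈ 𝓕, s.card = r)
    (hint : ∀ s ∈ 𝓕, ∀ t ∈ 𝓕, (s ∩ t).Nonempty)
    (hnocommon : ¬ ∃ a : Fin n, ∀ s ∈ 𝓕, a ∈ s) :
    𝓕.card ≤ (n - 1).choose (r - 1) - (n - r - 1).choose (r - 1) + 1 := by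
  classical
  have hn0 : 0 < n := by omega
  set 𝓖 : HM.Fam := 𝓕.image (fun s => s.image (Fin.val)) with h𝓖
  have himginj : ∀ s t : Finset (Fin n),
      s.image Fin.val = t.image Fin.val → s = t := by
    intro s t h
    ext z
    constructor
    · intro hz
      have : (z : ℕ) ∈ t.image Fin.val := h ▸ Finset.mem_image_of_mem _ hz
      obtain ⟨u, hu, huz⟩ := Finset.mem_image.1 this
      rwa [← Fin.val_injective huz]
    · intro hz
      have : (z : ℕ) ∈ s.image Fin.val := h.symm ▸ Finset.mem_image_of_mem _ hz
      obtain ⟨u, hu, huz⟩ := Finset.mem_image.1 this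
      rwa [← Fin.val_injective huz]
  have hcard' : 𝓖.card = 𝓕.card :=
    Finset.card_image_of_injOn (fun A _ B _ h => himginj A B h)
  have hsub : ∀ F ∈ 𝓖, F ⊆ Finset.range n := by
    intro F hF z hz
    obtain ⟨s, hs, rfl⟩ := Finset.mem_image.1 hF
    obtain ⟨u, hu, rfl⟩ := Finset.mem_image.1 hz
    exact Finset.mem_range.2 u.isLt
  have hsz : ∀ F ∈ 𝓖, F.card = r := by
    intro F hF
    obtain ⟨s, hs, rfl⟩ := Finset.mem_image.1 hF
    rw [Finset.card_image_of_injective _ Fin.val_injective]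
    exact hcard s hs
  have hint' : HM.Inter 𝓖 := by
    intro A hA B hB
    obtain ⟨s, hs, rfl⟩ := Finset.mem_image.1 hA
    obtain ⟨t, ht, rfl⟩ := Finset.mem_image.1 hB
    obtain ⟨z, hz⟩ := hint s hs t ht
    rw [Finset.mem_inter] at hz
    exact ⟨(z : ℕ), Finset.mem_inter.2
      ⟨Finset.mem_image_of_mem _ hz.1, Finset.mem_image_of_mem _ hz.2⟩⟩
  have hnt : ¬ ∃ a, ∀ F ∈ 𝓖, a ∈ F := by
    rintro ⟨a, haa⟩
    rcases 𝓕.eq_empty_or_nonempty with rfl | hne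
    · exact hnocommon ⟨⟨0, hn0⟩, by simp⟩
    · obtain ⟨s₀, hs₀⟩ := hne
      have ha0 : a ∈ s₀.image Fin.val := haa _ (Finset.mem_image_of_mem _ hs₀)
      obtain ⟨u, hu, huz⟩ := Finset.mem_image.1 ha0
      have han : a < n := huz ▸ u.isLt
      refine hnocommon ⟨⟨a, han⟩, fun s hs => ?_⟩
      have := haa _ (Finset.mem_image_of_mem _ hs)
      obtain ⟨v, hv, hva⟩ := Finset.mem_image.1 this
      have : v = (⟨a, han⟩ : Fin n) := Fin.ext hva
      rwa [← this]
  have hMP := HM.MP (HM.fwt 𝓖) n r 𝓖 rfl (by omega) hsub hsz hint' hnt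
  rw [hcard'] at hMP
  have hmono : (n-r-1).choose (r-1) ≤ (n-1).choose (r-1) :=
    Nat.choose_le_choose _ (by omega)
  omega
end

section
/- (Erdős–Ko–Rado theorem for exterior algebras) Suppose r < n/2. If W is a self-annihilating subspace of Λʳ(ℝⁿ), then dim W ≤ C(n−1, r−1), where C denotes the binomial coefficient. -/
open ExteriorAlgebra

namespace EKRAux

variable {n : ℕ}

/-- Standard basis vectors of `ℝⁿ`. -/
noncomputable def eV (n : ℕ) (i : Fin n) : Fin n → ℝ := fun j => if i = j then 1 else 0

/-- Product of the `ι (eV i)` over a list of indices. -/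
noncomputable def P (n : ℕ) (l : List (Fin n)) : ExteriorAlgebra ℝ (Fin n → ℝ) :=
  (l.map fun i => ι ℝ (eV n i)).prod

/-- Monomial of a finset of indices. -/
noncomputable def bS (n : ℕ) (S : Finset (Fin n)) : ExteriorAlgebra ℝ (Fin n → ℝ) :=
  P n (S.sort (· ≤ ·))

lemma P_append (l₁ l₂ : List (Fin n)) : P n (l₁ ++ l₂) = P n l₁ * P n l₂ := by
  rw [P, List.map_append, List.prod_append]; rfl

lemma P_perm {l l' : List (Fin n)} (h : l.Perm l') :
    ∃ ε : ℝ, (ε = 1 ∨ ε = -1) ∧ P n l = ε • P n l' := by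
  induction h with
  | nil => exact ⟨1, Or.inl rfl, by simp⟩
  | @cons x l₁ l₂ h ih =>
      obtain ⟨ε, hε, he⟩ := ih
      refine ⟨ε, hε, ?_⟩
      simp only [P, List.map_cons, List.prod_cons] at he ⊢
      rw [he, mul_smul_comm]
  | @swap x y l =>
      refine ⟨-1, Or.inr rfl, ?_⟩
      simp only [P, List.map_cons, List.prod_cons]
      have hxy : ι ℝ (eV n y) * ι ℝ (eV n x) = -(ι ℝ (eV n x) * ι ℝ (eV n y)) :=
        eq_neg_of_add_eq_zero_left (by rw [add_comm]; exact ι_add_mul_swap _ _)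
      rw [← mul_assoc, hxy, ← mul_assoc]
      simp
  | @trans l₁ l₂ l₃ h1 h2 ih1 ih2 =>
      obtain ⟨ε₁, hε₁, he₁⟩ := ih1
      obtain ⟨ε₂, hε₂, he₂⟩ := ih2
      refine ⟨ε₁ * ε₂, ?_, by rw [he₁, he₂, smul_smul]⟩
      rcases hε₁ with rfl | rfl <;> rcases hε₂ with rfl | rfl <;> simp

lemma P_dup {l : List (Fin n)} (h : ¬ l.Nodup) : P n l = 0 := by
  induction l with
  | nil => simp at h
  | cons a l ih =>
      rw [List.nodup_cons, not_and_or] at h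
      rcases h with h | h
      · rw [not_not] at h
        obtain ⟨ε, hε, he⟩ := P_perm (n := n) (List.perm_cons_erase h)
        have : P n (a :: l) = ε • (ι ℝ (eV n a) * (ι ℝ (eV n a) * P n (l.erase a))) := by
          simp only [P, List.map_cons, List.prod_cons] at he ⊢
          rw [he, mul_smul_comm]
        rw [this, ← mul_assoc, ι_sq_zero, zero_mul, smul_zero]
      · simp only [P, List.map_cons, List.prod_cons] at ih ⊢
        rw [ih h, mul_zero]

lemma P_nodup_eq {l : List (Fin n)} (h : l.Nodup) :
    ∃ ε : ℝ, (ε = 1 ∨ ε = -1) ∧ P n l = ε • bS n l.toFinset := by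
  refine P_perm (List.perm_of_nodup_nodup_toFinset_eq h (Finset.sort_nodup _ _) ?_)
  rw [Finset.sort_toFinset]

lemma bS_mul_of_disjoint {S T : Finset (Fin n)} (h : Disjoint S T) :
    ∃ ε : ℝ, (ε = 1 ∨ ε = -1) ∧ bS n S * bS n T = ε • bS n (S ∪ T) := by
  have h1 : (S.sort (· ≤ ·) ++ T.sort (· ≤ ·)).Nodup := by
    rw [List.nodup_append']
    refine ⟨Finset.sort_nodup _ _, Finset.sort_nodup _ _, fun a haS haT => ?_⟩
    rw [Finset.mem_sort] at haS haT
    exact (Finset.disjoint_left.1 h) haS haT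
  obtain ⟨ε, hε, he⟩ := P_nodup_eq h1
  refine ⟨ε, hε, ?_⟩
  rw [bS, bS, ← P_append, he]
  congr 2
  rw [List.toFinset_append, Finset.sort_toFinset, Finset.sort_toFinset]

lemma bS_mul_of_not_disjoint {S T : Finset (Fin n)} (h : ¬ Disjoint S T) :
    bS n S * bS n T = 0 := by
  rw [bS, bS, ← P_append]
  apply P_dup
  rw [List.nodup_append', not_and_or, not_and_or]
  right; right
  rw [Finset.not_disjoint_iff] at h
  obtain ⟨a, haS, haT⟩ := h
  intro hd
  exact hd (by rwa [Finset.mem_sort]) (by rwa [Finset.mem_sort])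

lemma bS_eq_ιMulti (S : Finset (Fin n)) :
    bS n S = ιMulti ℝ S.card (fun i => eV n (S.orderEmbOfFin rfl i)) := by
  rw [bS, P, ιMulti_apply]
  have hl : (S.sort (· ≤ ·)).length = S.card := Finset.length_sort _
  congr 1
  apply List.ext_getElem
  · simp [hl]
  · intro i h1 h2
    simp [Finset.orderEmbOfFin_apply]


noncomputable def φ (n : ℕ) (U : Finset (Fin n)) :
    ExteriorAlgebra ℝ (Fin n → ℝ) →ₗ[ℝ] ℝ :=
  liftAlternating (fun k =>
    if h : k = U.card then
      Matrix.detRowAlternating.compLinearMap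
        (LinearMap.funLeft ℝ ℝ (fun j : Fin k => U.orderEmbOfFin rfl (Fin.cast h j)))
    else 0)

lemma phi_ιMulti (U : Finset (Fin n)) {k : ℕ} (h : k = U.card) (v : Fin k → (Fin n → ℝ)) :
    φ n U (ιMulti ℝ k v) =
      Matrix.det (Matrix.of fun i j : Fin k => v i (U.orderEmbOfFin rfl (Fin.cast h j))) := by
  rw [φ, liftAlternating_apply_ιMulti, dif_pos h]
  rfl

lemma phi_bS (U S : Finset (Fin n)) (h : S.card = U.card) :
    φ n U (bS n S) = if S = U then 1 else 0 := by
  rw [bS_eq_ιMulti, phi_ιMulti U h]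
  by_cases hSU : S = U
  · subst hSU
    rw [if_pos rfl]
    have : (Matrix.of fun i j : Fin S.card =>
        eV n (S.orderEmbOfFin rfl i) (S.orderEmbOfFin rfl (Fin.cast h j))) = 1 := by
      ext i j
      show eV n (S.orderEmbOfFin rfl i) (S.orderEmbOfFin rfl (Fin.cast h j)) = _
      have hc : Fin.cast h j = j := rfl
      rw [hc]
      simp only [eV, Matrix.one_apply]
      by_cases hij : i = j
      · subst hij; simp
      · rw [if_neg (fun he => hij ((S.orderEmbOfFin rfl).injective he)), if_neg hij]
    rw [this, Matrix.det_one]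
  · rw [if_neg hSU]
    have hns : ¬ U ⊆ S := fun hsub => hSU (Finset.eq_of_subset_of_card_le hsub h.le).symm
    obtain ⟨u, huU, huS⟩ := Finset.not_subset.1 hns
    obtain ⟨j', hj'⟩ : ∃ j', U.orderEmbOfFin rfl j' = u := by
      have : u ∈ Set.range (U.orderEmbOfFin rfl) := by
        rw [Finset.range_orderEmbOfFin]; exact_mod_cast huU
      exact this
    apply Matrix.det_eq_zero_of_column_eq_zero (Fin.cast h.symm j')
    intro i
    show eV n (S.orderEmbOfFin rfl i) (U.orderEmbOfFin rfl (Fin.cast h (Fin.cast h.symm j'))) = 0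
    have hc : Fin.cast h (Fin.cast h.symm j') = j' := rfl
    rw [hc, hj']
    simp only [eV]
    rw [if_neg]
    intro he
    exact huS (he ▸ Finset.orderEmbOfFin_mem S rfl i)


lemma mem_span_bS {r : ℕ} {x : ExteriorAlgebra ℝ (Fin n → ℝ)}
    (hx : x ∈ ⋀[ℝ]^r (Fin n → ℝ)) :
    x ∈ Submodule.span ℝ (bS n '' {S : Finset (Fin n) | S.card = r}) := by
  classical
  refine Submodule.span_le.2 ?_ ((ιMulti_span_fixedDegree ℝ r (M := Fin n → ℝ)).ge hx)
  rintro _ ⟨v, rfl⟩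
  have hv : ιMulti ℝ r (M := Fin n → ℝ) v
      = ιMulti ℝ r (fun i => ∑ j : Fin n, v i j • eV n j) := by
    congr 1
    funext i
    exact pi_eq_sum_univ (v i)
  rw [hv]
  have hms := (ιMulti ℝ r (M := Fin n → ℝ)).toMultilinearMap.map_sum
    (g := fun (i : Fin r) (j : Fin n) => v i j • eV n j)
  rw [show ((ιMulti ℝ r (M := Fin n → ℝ)) fun i => ∑ j : Fin n, v i j • eV n j)
      = ∑ d : Fin r → Fin n, (ιMulti ℝ r (M := Fin n → ℝ)).toMultilinearMap
        fun i => v i (d i) • eV n (d i) from hms]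
  apply Submodule.sum_mem
  intro d _
  have hsm := (ιMulti ℝ r (M := Fin n → ℝ)).toMultilinearMap.map_smul_univ
    (fun i => v i (d i)) (fun i => eV n (d i))
  rw [hsm]
  apply Submodule.smul_mem
  show ιMulti ℝ r (fun i => eV n (d i)) ∈ _
  by_cases hd : Function.Injective d
  · have hPe : ιMulti ℝ r (fun i => eV n (d i)) = P n (List.ofFn d) := by
      rw [ιMulti_apply, P, List.map_ofFn]
      rfl
    obtain ⟨ε, hε, he⟩ := P_nodup_eq (List.nodup_ofFn.2 hd)
    rw [hPe, he]
    apply Submodule.smul_mem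
    apply Submodule.subset_span
    refine ⟨(List.ofFn d).toFinset, ?_, rfl⟩
    simp only [Set.mem_setOf_eq]
    rw [List.toFinset_card_of_nodup (List.nodup_ofFn.2 hd), List.length_ofFn]
  · have : ¬ Function.Injective (fun i => eV n (d i)) := by
      intro hinj
      exact hd fun a b hab => hinj (by simp only [hab])
    rw [AlternatingMap.map_eq_zero_of_not_injective _ _ this]
    exact Submodule.zero_mem _

lemma repr_eq {r : ℕ} {x : ExteriorAlgebra ℝ (Fin n → ℝ)}
    (hx : x ∈ ⋀[ℝ]^r (Fin n → ℝ)) :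
    x = ∑ S ∈ Finset.univ.powersetCard r, φ n S x • bS n S := by
  classical
  have h1 := mem_span_bS hx
  have himg : bS n '' {S : Finset (Fin n) | S.card = r}
      = ↑((Finset.univ.powersetCard r).image (bS n)) := by
    rw [Finset.coe_image]
    ext S
    simp [Finset.mem_powersetCard_univ]
  rw [himg] at h1
  obtain ⟨c, -, hc⟩ := Submodule.mem_span_finset.1 h1
  have binj : ∀ S ∈ Finset.univ.powersetCard r, ∀ S' ∈ Finset.univ.powersetCard r,
      bS n S = bS n S' → S = S' := by
    intro S hS S' hS' hb
    rw [Finset.mem_powersetCard_univ] at hS hS'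
    have h1 := phi_bS S S (rfl)
    have h2 := phi_bS S S' (by rw [hS, hS'])
    rw [if_pos rfl] at h1
    rw [← hb, h1] at h2
    by_contra hne
    rw [if_neg (fun h => hne h.symm)] at h2
    norm_num at h2
  rw [Finset.sum_image binj] at hc
  have hcoef : ∀ U ∈ Finset.univ.powersetCard r, φ n U x = c (bS n U) := by
    intro U hU
    rw [← hc, map_sum]
    have : ∀ S ∈ Finset.univ.powersetCard r,
        φ n U (c (bS n S) • bS n S) = if S = U then c (bS n S) else 0 := by
      intro S hS
      rw [map_smul, smul_eq_mul, phi_bS U S (by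
        rw [Finset.mem_powersetCard_univ] at hU hS; rw [hS, hU])]
      by_cases h : S = U <;> simp [h]
    rw [Finset.sum_congr rfl this, Finset.sum_ite_eq' _ U, if_pos hU]
  calc x = ∑ S ∈ Finset.univ.powersetCard r, c (bS n S) • bS n S := hc.symm
  _ = ∑ S ∈ Finset.univ.powersetCard r, φ n S x • bS n S :=
      Finset.sum_congr rfl fun S hS => by rw [hcoef S hS]


lemma sum_two_pow_lt {k : ℕ} : ∀ S : Finset ℕ, (∀ i ∈ S, i < k) → ∑ i ∈ S, 2 ^ i < 2 ^ k := by
  induction k with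
  | zero =>
      intro S hS
      have : S = ∅ := Finset.eq_empty_of_forall_notMem fun i hi => Nat.not_lt_zero i (hS i hi)
      simp [this]
  | succ k ih =>
      intro S hS
      have h1 : ∑ i ∈ S.erase k, 2 ^ i < 2 ^ k :=
        ih _ fun i hi => lt_of_le_of_ne
          (Nat.lt_succ_iff.1 (hS i (Finset.mem_of_mem_erase hi)))
          (Finset.ne_of_mem_erase hi)
      have hpow : (2 : ℕ) ^ (k + 1) = 2 ^ k + 2 ^ k := by ring
      by_cases hk : k ∈ S
      · rw [← Finset.sum_erase_add S _ hk]
        omega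
      · rw [← Finset.erase_eq_of_notMem hk]
        omega

lemma maskNat_inj (S : Finset ℕ) : ∀ T : Finset ℕ,
    ∑ i ∈ S, 2 ^ i = ∑ i ∈ T, 2 ^ i → S = T := by
  induction S using Finset.strongInduction with
  | _ S ih =>
    intro T hST
    have hzero : ∀ U : Finset ℕ, U.Nonempty → ∑ i ∈ U, 2 ^ i ≠ 0 := by
      rintro U ⟨a, ha⟩ h0
      rw [Finset.sum_eq_zero_iff] at h0
      simpa using h0 a ha
    rcases S.eq_empty_or_nonempty with rfl | hS
    · rcases T.eq_empty_or_nonempty with rfl | hT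
      · rfl
      · exact absurd hST.symm (by simpa using hzero T hT)
    · have hT : T.Nonempty := by
        rcases T.eq_empty_or_nonempty with rfl | hT
        · exact absurd hST (by simpa using hzero S hS)
        · exact hT
      set a := S.max' hS with ha
      set b := T.max' hT with hb
      have hab : a = b := by
        have h1 : 2 ^ a ≤ ∑ i ∈ S, 2 ^ i :=
          Finset.single_le_sum (fun i _ => Nat.zero_le _) (S.max'_mem hS)
        have h2 : ∑ i ∈ T, 2 ^ i < 2 ^ (b + 1) :=
          sum_two_pow_lt T fun i hi => Nat.lt_succ_of_le (T.le_max' i hi)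
        have h3 : 2 ^ b ≤ ∑ i ∈ T, 2 ^ i :=
          Finset.single_le_sum (fun i _ => Nat.zero_le _) (T.max'_mem hT)
        have h4 : ∑ i ∈ S, 2 ^ i < 2 ^ (a + 1) :=
          sum_two_pow_lt S fun i hi => Nat.lt_succ_of_le (S.le_max' i hi)
        have hle1 : a < b + 1 := by
          rw [← Nat.pow_lt_pow_iff_right (a := 2) one_lt_two]
          omega
        have hle2 : b < a + 1 := by
          rw [← Nat.pow_lt_pow_iff_right (a := 2) one_lt_two]
          omega
        omega
      have haT : a ∈ T := hab ▸ T.max'_mem hT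
      have e1 : ∑ i ∈ S.erase a, 2 ^ i + 2 ^ a = ∑ i ∈ S, 2 ^ i :=
        Finset.sum_erase_add _ _ (S.max'_mem hS)
      have e2 : ∑ i ∈ T.erase a, 2 ^ i + 2 ^ a = ∑ i ∈ T, 2 ^ i :=
        Finset.sum_erase_add _ _ haT
      have heq : ∑ i ∈ S.erase a, 2 ^ i = ∑ i ∈ T.erase a, 2 ^ i := by omega
      have := ih (S.erase a) (Finset.erase_ssubset (S.max'_mem hS)) (T.erase a) heq
      rw [← Finset.insert_erase (S.max'_mem hS), this, Finset.insert_erase haT]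

def mask (S : Finset (Fin n)) : ℕ := ∑ i ∈ S, 2 ^ (i : ℕ)

lemma mask_inj {S T : Finset (Fin n)} (h : mask S = mask T) : S = T := by
  have hS : ∑ i ∈ S.image Fin.val, 2 ^ i = mask S :=
    Finset.sum_image fun a _ b _ hab => Fin.val_injective hab
  have hT : ∑ i ∈ T.image Fin.val, 2 ^ i = mask T :=
    Finset.sum_image fun a _ b _ hab => Fin.val_injective hab
  have := maskNat_inj (S.image Fin.val) (T.image Fin.val) (by rw [hS, hT]; exact h)
  exact Finset.image_injective Fin.val_injective this

lemma mask_union {S T : Finset (Fin n)} (h : Disjoint S T) :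
    mask (S ∪ T) = mask S + mask T := Finset.sum_union h


lemma key {r : ℕ} {x y : ExteriorAlgebra ℝ (Fin n → ℝ)}
    (hx : x ∈ ⋀[ℝ]^r (Fin n → ℝ)) (hy : y ∈ ⋀[ℝ]^r (Fin n → ℝ))
    {S T : Finset (Fin n)} (hSm : S ∈ Finset.univ.powersetCard r)
    (hTm : T ∈ Finset.univ.powersetCard r) (hd : Disjoint S T)
    (hxS : φ n S x ≠ 0) (hyT : φ n T y ≠ 0)
    (hmx : ∀ S' ∈ Finset.univ.powersetCard r, φ n S' x ≠ 0 → mask S' ≤ mask S)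
    (hmy : ∀ T' ∈ Finset.univ.powersetCard r, φ n T' y ≠ 0 → mask T' ≤ mask T) :
    x * y ≠ 0 := by
  classical
  have hcard : ∀ U : Finset (Fin n), U ∈ Finset.univ.powersetCard r → U.card = r := fun U hU =>
    (Finset.mem_powersetCard.1 hU).2
  intro hxy0
  apply absurd (congrArg (φ n (S ∪ T)) hxy0)
  rw [map_zero]
  -- compute φ (S∪T) (x*y)
  have hrx := repr_eq hx
  have hry := repr_eq hy
  rw [show x * y = ∑ S' ∈ Finset.univ.powersetCard r, ∑ T' ∈ Finset.univ.powersetCard r,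
      (φ n S' x * φ n T' y) • (bS n S' * bS n T') by
    conv_lhs => rw [hrx, hry]
    rw [Finset.sum_mul_sum]
    exact Finset.sum_congr rfl fun S' _ => Finset.sum_congr rfl fun T' _ => by
      rw [smul_mul_smul_comm]]
  simp only [map_sum]
  have hterm : ∀ S' ∈ Finset.univ.powersetCard r, ∀ T' ∈ Finset.univ.powersetCard r,
      ¬(S' = S ∧ T' = T) →
      φ n (S ∪ T) ((φ n S' x * φ n T' y) • (bS n S' * bS n T')) = 0 := by
    intro S' hS' T' hT' hne
    by_cases hx0 : φ n S' x = 0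
    · rw [hx0, zero_mul, zero_smul, map_zero]
    by_cases hy0 : φ n T' y = 0
    · rw [hy0, mul_zero, zero_smul, map_zero]
    by_cases hd' : Disjoint S' T'
    · obtain ⟨ε, hε, he⟩ := bS_mul_of_disjoint hd'
      rw [he, map_smul, map_smul]
      have hcc : (S' ∪ T').card = (S ∪ T).card := by
        rw [Finset.card_union_of_disjoint hd', Finset.card_union_of_disjoint hd,
          hcard S' hS', hcard T' hT', hcard S hSm, hcard T hTm]
      rw [phi_bS (S ∪ T) (S' ∪ T') hcc]
      have hU : ¬ (S' ∪ T' = S ∪ T) := by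
        intro hu
        have h1 : mask S' + mask T' = mask S + mask T := by
          rw [← mask_union hd', ← mask_union hd, hu]
        have h2 := hmx S' hS' hx0
        have h3 := hmy T' hT' hy0
        have h4 : mask S' = mask S := by omega
        have h5 : mask T' = mask T := by omega
        exact hne ⟨mask_inj h4, mask_inj h5⟩
      rw [if_neg hU, smul_zero, smul_zero]
    · rw [bS_mul_of_not_disjoint hd', smul_zero, map_zero]
  rw [Finset.sum_eq_single_of_mem S hSm (fun S' hS' hne =>
    Finset.sum_eq_zero fun T' hT' => hterm S' hS' T' hT' (fun h => hne h.1))]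
  rw [Finset.sum_eq_single_of_mem T hTm (fun T' hT' hne =>
    hterm S hSm T' hT' (fun h => hne h.2))]
  obtain ⟨ε, hε, he⟩ := bS_mul_of_disjoint hd
  rw [he, map_smul, map_smul, phi_bS (S ∪ T) (S ∪ T) rfl, if_pos rfl]
  have hne := mul_ne_zero hxS hyT
  rcases hε with rfl | rfl <;>
    simp only [smul_eq_mul, mul_one, mul_neg, one_mul, neg_eq_zero] <;> exact hne


end EKRAux

open EKRAux in
/-- **Erdős–Ko–Rado theorem for exterior algebras.** If `r < n/2` and `W` is a
self-annihilating subspace of `Λʳ(ℝⁿ)`, then `dim W ≤ C(n-1, r-1)`. -/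
theorem ekr_exterior_algebra (n r : ℕ) (hr : 2 * r < n)
    (W : Submodule ℝ (ExteriorAlgebra ℝ (Fin n → ℝ)))
    (hWr : W ≤ ⋀[ℝ]^r (Fin n → ℝ))
    (hann : ∀ w₁ ∈ W, ∀ w₂ ∈ W, w₁ * w₂ = 0) :
    Module.finrank ℝ W ≤ (n - 1).choose (r - 1) := by
  classical
  set pc : Finset (Finset (Fin n)) := Finset.univ.powersetCard r with hpc
  -- leading set existence
  have hlead : ∀ x : ExteriorAlgebra ℝ (Fin n → ℝ), x ∈ W → x ≠ 0 →
      ∃ S ∈ pc, φ n S x ≠ 0 ∧ ∀ S' ∈ pc, φ n S' x ≠ 0 → mask S' ≤ mask S := by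
    intro x hxW hx0
    have hsupp : (pc.filter (fun S => φ n S x ≠ 0)).Nonempty := by
      rw [Finset.filter_nonempty_iff]
      by_contra hcon
      push_neg at hcon
      apply hx0
      rw [repr_eq (hWr hxW)]
      apply Finset.sum_eq_zero
      intro S hS
      rw [hcon S hS, zero_smul]
    obtain ⟨S, hSmem, hSmax⟩ := Finset.exists_max_image _ mask hsupp
    rw [Finset.mem_filter] at hSmem
    exact ⟨S, hSmem.1, hSmem.2, fun S' hS' hne =>
      hSmax S' (Finset.mem_filter.2 ⟨hS', hne⟩)⟩
  set F : Finset (Finset (Fin n)) := pc.filter (fun S => ∃ x, x ∈ W ∧ x ≠ 0 ∧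
      φ n S x ≠ 0 ∧ ∀ S' ∈ pc, φ n S' x ≠ 0 → mask S' ≤ mask S) with hF
  -- F is intersecting
  have hint : (F : Set (Finset (Fin n))).Intersecting := by
    intro A hA B hB hd
    rw [Finset.mem_coe, hF, Finset.mem_filter] at hA hB
    obtain ⟨hApc, x, hxW, hx0, hxA, hxmax⟩ := hA
    obtain ⟨hBpc, y, hyW, hy0, hyB, hymax⟩ := hB
    exact key (hWr hxW) (hWr hyW) hApc hBpc hd hxA hyB hxmax hymax
      (hann x hxW y hyW)
  -- F is sized
  have hsized : (F : Set (Finset (Fin n))).Sized r := by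
    intro A hA
    rw [Finset.mem_coe, hF, Finset.mem_filter] at hA
    exact (Finset.mem_powersetCard.1 hA.1).2
  have hFcard : F.card ≤ (n - 1).choose (r - 1) :=
    Finset.erdos_ko_rado hint hsized (by omega)
  -- injective map W → (F → ℝ)
  have hinj : Function.Injective
      (LinearMap.pi (fun S : F => (φ n (S : Finset (Fin n))).comp W.subtype)) := by
    rw [← LinearMap.ker_eq_bot, LinearMap.ker_eq_bot']
    intro w hw
    by_contra hw0
    have hwne : (w : ExteriorAlgebra ℝ (Fin n → ℝ)) ≠ 0 := by
      intro h; exact hw0 (Subtype.ext h)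
    obtain ⟨S, hSpc, hSne, hSmax⟩ := hlead w w.2 hwne
    have hSF : S ∈ F := by
      rw [hF, Finset.mem_filter]
      exact ⟨hSpc, w, w.2, hwne, hSne, hSmax⟩
    have h := congrFun hw ⟨S, hSF⟩
    rw [LinearMap.pi_apply, LinearMap.comp_apply] at h
    exact hSne h
  have hrank : Module.finrank ℝ W ≤ F.card := by
    have h1 := LinearMap.finrank_le_finrank_of_injective hinj
    rwa [Module.finrank_pi ℝ, Fintype.card_coe] at h1
  exact hrank.trans hFcard
end
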